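/- arXiv:math/0102228 — 6 statements merged into one kernel-verified Lean document; each statement's English description precedes it below -/
import Mathlib

section
/- Let F be a field of characteristic not 2, let T be a commutative local F-algebra with maximal ideal M and residue field K = T/M. Let a₁, ..., aₛ be units of T. Then the T-algebra S = T[x₁,...,xₛ]/(x₁² - a₁, ..., xₛ² - aₛ) is a semilocal ring, and its Jacobson radical is M·S. -/
open MvPolynomial

universe u

theorem aux_isReduced_of_sq {R : Type*} [MonoidWithZero R]
    (h : ∀ x : R, x ^ 2 = 0 → x = 0) : IsReduced R := by
  constructor
  rintro x ⟨n, hn⟩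
  induction n using Nat.strong_induction_on generalizing x with
  | _ n ih =>
    match n, hn with
    | 0, hn =>
      rw [pow_zero] at hn
      have hx : x = 0 := by
        have := congrArg (fun t => x * t) hn
        simpa using this
      exact hx
    | 1, hn => simpa using hn
    | (m+2), hn =>
      have h2 : x ^ ((m+2+1)/2) = 0 := by
        apply h
        rw [← pow_mul]
        have : (m+2) ≤ ((m+2+1)/2) * 2 := by omega
        calc x ^ (((m+2+1)/2) * 2) = x ^ (m+2) * x ^ (((m+2+1)/2) * 2 - (m+2)) := by
              rw [← pow_add]; congr 1; omega
          _ = 0 := by rw [hn, zero_mul]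
      exact ih ((m+2+1)/2) (by omega) x h2

open Polynomial in
theorem aux_adjoinRoot_reduced {A : Type*} [CommRing A] [IsReduced A]
    (h2 : IsUnit (2 : A)) {b : A} (hb : IsUnit b) :
    IsReduced (AdjoinRoot (Polynomial.X ^ 2 - Polynomial.C b)) := by
  rcases subsingleton_or_nontrivial A with hA | hA
  · have : Subsingleton (AdjoinRoot (Polynomial.X ^ 2 - Polynomial.C b)) := by
      have : Subsingleton (Polynomial A) := inferInstance
      exact Quotient.instSubsingletonQuotient _
    exact ⟨fun x _ => Subsingleton.elim _ _⟩
  set f : A[X] := Polynomial.X ^ 2 - Polynomial.C b with hf_def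
  have hf : f.Monic := monic_X_pow_sub_C b (by norm_num)
  apply aux_isReduced_of_sq
  intro z hz
  obtain ⟨p0, rfl⟩ := AdjoinRoot.mk_surjective (g := f) z
  set r : A[X] := p0 %ₘ f with hr_def
  have hmkr : AdjoinRoot.mk f r = AdjoinRoot.mk f p0 := by
    rw [AdjoinRoot.mk_eq_mk]
    refine ⟨-(p0 /ₘ f), ?_⟩
    have := Polynomial.modByMonic_add_div p0 f
    linear_combination this - p0
  have hdeg : r.degree < 2 := by
    have := Polynomial.degree_modByMonic_lt p0 hf
    rwa [hf_def, Polynomial.degree_X_pow_sub_C (by norm_num) b] at this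
  set p := r.coeff 0
  set q := r.coeff 1
  have hdeg1 : r.degree ≤ 1 := by
    have h21 : (2 : WithBot ℕ) = 1 + 1 := by norm_num
    rw [h21] at hdeg
    exact Order.le_of_lt_succ (by exact hdeg)
  have hr : r = Polynomial.C q * Polynomial.X + Polynomial.C p :=
    Polynomial.eq_X_add_C_of_degree_le_one hdeg1
  -- z^2 = 0 means f ∣ r^2
  have hdvd : f ∣ r ^ 2 := by
    have : AdjoinRoot.mk f (r ^ 2) = 0 := by
      rw [map_pow, hmkr, hz]
    rwa [AdjoinRoot.mk_eq_zero] at this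
  have hdvd2 : f ∣ Polynomial.C (2 * p * q) * Polynomial.X + Polynomial.C (p ^ 2 + b * q ^ 2) := by
    obtain ⟨c, hc⟩ := hdvd
    refine ⟨c - Polynomial.C (q ^ 2), ?_⟩
    rw [mul_sub, ← hc, hr, hf_def]
    simp only [Polynomial.C_add, Polynomial.C_mul, Polynomial.C_pow, map_ofNat]
    ring
  have hglt : (Polynomial.C (2 * p * q) * Polynomial.X
      + Polynomial.C (p ^ 2 + b * q ^ 2)).degree < 2 := by
    apply lt_of_le_of_lt (Polynomial.degree_add_le _ _)
    rw [max_lt_iff]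
    constructor
    · refine lt_of_le_of_lt (Polynomial.degree_mul_le _ _) ?_
      refine lt_of_le_of_lt (add_le_add Polynomial.degree_C_le Polynomial.degree_X_le) ?_
      norm_num
    · exact lt_of_le_of_lt Polynomial.degree_C_le (by norm_num)
  have hzero : Polynomial.C (2 * p * q) * Polynomial.X + Polynomial.C (p ^ 2 + b * q ^ 2) = 0 := by
    have hmod1 : (Polynomial.C (2 * p * q) * Polynomial.X + Polynomial.C (p ^ 2 + b * q ^ 2)) %ₘ f
        = _ := (Polynomial.modByMonic_eq_self_iff hf).mpr
          (by rwa [hf_def, Polynomial.degree_X_pow_sub_C (by norm_num) b])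
    rw [← hmod1]
    exact (Polynomial.modByMonic_eq_zero_iff_dvd hf).mpr hdvd2
  have hc1 : 2 * p * q = 0 := by
    have h := congrArg (fun g => Polynomial.coeff g 1) hzero
    simp only [Polynomial.coeff_add, Polynomial.coeff_C_mul, Polynomial.coeff_X_one,
      Polynomial.coeff_C, mul_one, Polynomial.coeff_zero] at h
    simpa using h
  have hc0 : p ^ 2 + b * q ^ 2 = 0 := by
    have h := congrArg (fun g => Polynomial.coeff g 0) hzero
    simp only [Polynomial.coeff_add, Polynomial.coeff_C_mul, Polynomial.coeff_X_zero,
      Polynomial.coeff_C, mul_zero, Polynomial.coeff_zero] at h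
    simpa using h
  have hpq : p * q = 0 := by
    have h' : (2 : A) * (p * q) = 2 * 0 := by rw [mul_zero]; linear_combination hc1
    exact h2.mul_left_cancel h'
  have hq : q = 0 := by
    have h3 : b * q ^ 3 = 0 := by
      have h' := congrArg (fun t => t * q) hc0
      simp only [add_mul, zero_mul] at h'
      have hpq2 : p ^ 2 * q = 0 := by rw [pow_two, mul_assoc, hpq, mul_zero]
      rw [hpq2, zero_add] at h'
      calc b * q ^ 3 = b * q ^ 2 * q := by ring
        _ = 0 := h'
    have hq3 : q ^ 3 = 0 := by
      have h' : b * q ^ 3 = b * 0 := by rw [mul_zero, h3]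
      exact hb.mul_left_cancel h'
    exact IsNilpotent.eq_zero ⟨3, hq3⟩
  have hp : p = 0 := by
    have hp2 : p ^ 2 = 0 := by rw [hq] at hc0; simpa using hc0
    exact IsNilpotent.eq_zero ⟨2, hp2⟩
  rw [← hmkr, hr, hp, hq]
  simp

open Polynomial in
set_option maxHeartbeats 2000000 in
theorem aux_mv_reduced (s : ℕ) : ∀ {A : Type u} [CommRing A] [IsReduced A],
    IsUnit (2 : A) → ∀ (a : Fin s → A), (∀ i, IsUnit (a i)) →
    IsReduced (MvPolynomial (Fin s) A ⧸
      Ideal.span {p | ∃ i, p = MvPolynomial.X i ^ 2 - MvPolynomial.C (a i)}) := by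
  induction s with
  | zero =>
    intro A _ _ _ a _
    have hG : {p : MvPolynomial (Fin 0) A | ∃ i, p = MvPolynomial.X i ^ 2 - MvPolynomial.C (a i)}
        = (∅ : Set _) := by
      ext p; simp
    have hbot : Ideal.span {p : MvPolynomial (Fin 0) A
        | ∃ i, p = MvPolynomial.X i ^ 2 - MvPolynomial.C (a i)} = ⊥ := by
      rw [hG, Ideal.span_empty]
    have e : (MvPolynomial (Fin 0) A ⧸ Ideal.span {p : MvPolynomial (Fin 0) A
        | ∃ i, p = MvPolynomial.X i ^ 2 - MvPolynomial.C (a i)}) ≃+* A :=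
      (Ideal.quotEquivOfEq (hbot.trans (RingHom.ker_coe_equiv
        (MvPolynomial.isEmptyRingEquiv A (Fin 0))).symm)).trans
        (RingHom.quotientKerEquivOfSurjective
          (MvPolynomial.isEmptyRingEquiv A (Fin 0)).surjective)
    exact isReduced_of_injective (e : _ →+* A) e.injective
  | succ n ih =>
    intro A _ _ h2 a ha
    classical
    set G : Set (MvPolynomial (Fin (n+1)) A) :=
      {p | ∃ i, p = MvPolynomial.X i ^ 2 - MvPolynomial.C (a i)} with hG_def
    set I : Ideal (MvPolynomial (Fin (n+1)) A) := Ideal.span G with hI_def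
    set G' : Set (MvPolynomial (Fin n) A) :=
      {p | ∃ i : Fin n, p = MvPolynomial.X i ^ 2 - MvPolynomial.C (a i.succ)} with hG'_def
    set I' : Ideal (MvPolynomial (Fin n) A) := Ideal.span G' with hI'_def
    set f0 : Polynomial (MvPolynomial (Fin n) A) :=
      Polynomial.X ^ 2 - Polynomial.C (MvPolynomial.C (a 0)) with hf0_def
    set e1 : MvPolynomial (Fin (n+1)) A ≃+* Polynomial (MvPolynomial (Fin n) A) :=
      (MvPolynomial.finSuccEquiv A n).toRingEquiv with he1_def
    have hC : ∀ x : A, e1 (MvPolynomial.C x) = Polynomial.C (MvPolynomial.C x) := fun x => by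
      simp [he1_def, MvPolynomial.finSuccEquiv_apply]
    have hX0 : e1 (MvPolynomial.X 0) = Polynomial.X := MvPolynomial.finSuccEquiv_X_zero
    have hXs : ∀ j : Fin n, e1 (MvPolynomial.X j.succ) = Polynomial.C (MvPolynomial.X j) :=
      fun j => MvPolynomial.finSuccEquiv_X_succ
    have himg : (e1 : MvPolynomial (Fin (n+1)) A →+* Polynomial (MvPolynomial (Fin n) A)) '' G
        = (Polynomial.C '' G') ∪ {f0} := by
      ext q
      constructor
      · rintro ⟨p, ⟨i, rfl⟩, rfl⟩
        induction i using Fin.cases with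
        | zero =>
          right
          simp only [Set.mem_singleton_iff, hf0_def, RingHom.coe_coe, map_sub, map_pow, hX0, hC]
        | succ j =>
          left
          refine ⟨MvPolynomial.X j ^ 2 - MvPolynomial.C (a j.succ), ⟨j, rfl⟩, ?_⟩
          simp only [RingHom.coe_coe, map_sub, map_pow, hXs, hC]
      · rintro (⟨p, ⟨j, rfl⟩, rfl⟩ | rfl)
        · refine ⟨MvPolynomial.X j.succ ^ 2 - MvPolynomial.C (a j.succ), ⟨j.succ, rfl⟩, ?_⟩
          simp only [RingHom.coe_coe, map_sub, map_pow, hXs, hC]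
        · refine ⟨MvPolynomial.X 0 ^ 2 - MvPolynomial.C (a 0), ⟨0, rfl⟩, ?_⟩
          simp only [hf0_def, RingHom.coe_coe, map_sub, map_pow, hX0, hC]
    have hmap : I.map (e1 : MvPolynomial (Fin (n+1)) A →+* Polynomial (MvPolynomial (Fin n) A))
        = Ideal.map Polynomial.C I' ⊔ Ideal.span {f0} := by
      rw [hI_def, Ideal.map_span, himg, Ideal.span_union, hI'_def, Ideal.map_span]
    -- now the chain of equivalences
    have E12 := Ideal.quotientEquiv I (Ideal.map Polynomial.C I' ⊔ Ideal.span {f0}) e1 hmap.symm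
    have E3 := (DoubleQuot.quotQuotEquivQuotSup (Ideal.map Polynomial.C I') (Ideal.span {f0})).symm
    set e4 : ((MvPolynomial (Fin n) A)[X] ⧸ Ideal.map Polynomial.C I')
        ≃+* (MvPolynomial (Fin n) A ⧸ I')[X] :=
      (Ideal.polynomialQuotientEquivQuotientPolynomial I').symm with he4_def
    have hmap2 : ((Ideal.span {f0}).map (Ideal.Quotient.mk (Ideal.map Polynomial.C I'))).map
        (e4 : _ →+* _) = Ideal.span {Polynomial.X ^ 2
          - Polynomial.C (Ideal.Quotient.mk I' (MvPolynomial.C (a 0)))} := by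
      rw [Ideal.map_map, Ideal.map_span]
      congr 1
      rw [Set.image_singleton]
      congr 1
      show e4 ((Ideal.Quotient.mk (Ideal.map Polynomial.C I')) f0) = _
      rw [he4_def]
      refine (Ideal.polynomialQuotientEquivQuotientPolynomial_symm_mk I' f0).trans ?_
      rw [hf0_def, Polynomial.map_sub, Polynomial.map_pow, Polynomial.map_X, Polynomial.map_C]
    haveI : (Ideal.span {Polynomial.X ^ 2
        - Polynomial.C (Ideal.Quotient.mk I' (MvPolynomial.C (a 0)))}).IsTwoSided :=
      ⟨fun b' ha => mul_comm b' _ ▸ Ideal.mul_mem_left _ b' ha⟩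
    have E4 := Ideal.quotientEquiv ((Ideal.span {f0}).map (Ideal.Quotient.mk
      (Ideal.map Polynomial.C I'))) (Ideal.span {Polynomial.X ^ 2
          - Polynomial.C (Ideal.Quotient.mk I' (MvPolynomial.C (a 0)))}) e4 hmap2.symm
    haveI hred' : IsReduced (MvPolynomial (Fin n) A ⧸ I') := by
      apply ih ?_ (fun i => a i.succ) (fun i => ha i.succ)
      have := h2.map ((Ideal.Quotient.mk I').comp MvPolynomial.C)
      rwa [map_ofNat] at this
    haveI hredT : IsReduced (Polynomial (MvPolynomial (Fin n) A ⧸ I') ⧸ Ideal.span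
        {Polynomial.X ^ 2 - Polynomial.C (Ideal.Quotient.mk I' (MvPolynomial.C (a 0)))}) := by
      have hb : IsUnit (Ideal.Quotient.mk I' (MvPolynomial.C (a 0))) := by
        have := (ha 0).map ((Ideal.Quotient.mk I').comp MvPolynomial.C)
        simpa using this
      have h2' : IsUnit (2 : MvPolynomial (Fin n) A ⧸ I') := by
        have := h2.map ((Ideal.Quotient.mk I').comp MvPolynomial.C)
        rwa [map_ofNat] at this
      exact aux_adjoinRoot_reduced h2' hb
    have E := (E12.trans E3).trans E4
    exact isReduced_of_injective E.toRingHom (by exact E.injective)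

open Polynomial in
theorem aux_mv_finite {A : Type*} [CommRing A] (s : ℕ) (a : Fin s → A) :
    Module.Finite A (MvPolynomial (Fin s) A ⧸
      Ideal.span {p | ∃ i, p = MvPolynomial.X i ^ 2 - MvPolynomial.C (a i)}) := by
  set I : Ideal (MvPolynomial (Fin s) A) :=
    Ideal.span {p | ∃ i, p = MvPolynomial.X i ^ 2 - MvPolynomial.C (a i)} with hI_def
  set mk := Ideal.Quotient.mkₐ A I with hmk_def
  have hadj : Algebra.adjoin A (Set.range fun i : Fin s => mk (MvPolynomial.X i)) = ⊤ := by
    have h1 : (Set.range fun i : Fin s => mk (MvPolynomial.X i))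
        = mk '' (Set.range (MvPolynomial.X : Fin s → MvPolynomial (Fin s) A)) := by
      rw [← Set.range_comp]; rfl
    rw [h1, ← AlgHom.map_adjoin, MvPolynomial.adjoin_range_X, Algebra.map_top,
      AlgHom.range_eq_top]
    exact Ideal.Quotient.mkₐ_surjective A I
  have hint : ∀ x ∈ Set.range fun i : Fin s => mk (MvPolynomial.X i), IsIntegral A x := by
    rintro x ⟨i, rfl⟩
    refine ⟨Polynomial.X ^ 2 - Polynomial.C (a i), monic_X_pow_sub_C _ (by norm_num), ?_⟩
    rw [Polynomial.eval₂_sub, Polynomial.eval₂_pow, Polynomial.eval₂_X, Polynomial.eval₂_C]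
    have : mk (MvPolynomial.X i) ^ 2 - algebraMap A _ (a i)
        = mk (MvPolynomial.X i ^ 2 - MvPolynomial.C (a i)) := by
      rw [map_sub, map_pow]; rfl
    rw [this]
    have hmem : MvPolynomial.X i ^ 2 - MvPolynomial.C (a i) ∈ I :=
      Ideal.subset_span ⟨i, rfl⟩
    simpa [hmk_def, Ideal.Quotient.mkₐ_eq_mk] using (Ideal.Quotient.eq_zero_iff_mem).mpr hmem
  have hfg := fg_adjoin_of_finite (Set.finite_range _) hint
  rw [hadj] at hfg
  exact ⟨by rwa [Algebra.top_toSubmodule] at hfg⟩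

open Polynomial in
set_option maxHeartbeats 1000000 in
set_option synthInstance.maxHeartbeats 400000 in
theorem main_aux (T : Type u) [CommRing T] [IsLocalRing T] (h2 : IsUnit (2 : T))
    (s : ℕ) (a : Fin s → Tˣ) :
    Finite (MaximalSpectrum (MvPolynomial (Fin s) T ⧸
        Ideal.span {p : MvPolynomial (Fin s) T |
          ∃ i, p = MvPolynomial.X i ^ 2 - MvPolynomial.C (a i : T)})) ∧
      Ideal.jacobson (⊥ : Ideal (MvPolynomial (Fin s) T ⧸
          Ideal.span {p : MvPolynomial (Fin s) T |
            ∃ i, p = MvPolynomial.X i ^ 2 - MvPolynomial.C (a i : T)})) =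
        Ideal.map (algebraMap T (MvPolynomial (Fin s) T ⧸
            Ideal.span {p : MvPolynomial (Fin s) T |
              ∃ i, p = MvPolynomial.X i ^ 2 - MvPolynomial.C (a i : T)}))
          (IsLocalRing.maximalIdeal T) := by
  classical
  set M : Ideal T := IsLocalRing.maximalIdeal T with hM_def
  set G : Set (MvPolynomial (Fin s) T) :=
    {p | ∃ i, p = MvPolynomial.X i ^ 2 - MvPolynomial.C (a i : T)} with hG_def
  set I : Ideal (MvPolynomial (Fin s) T) := Ideal.span G with hI_def
  letI : Field (T ⧸ M) := Ideal.Quotient.field M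
  set ab : Fin s → T ⧸ M := fun i => Ideal.Quotient.mk M (a i : T) with hab_def
  set IK : Ideal (MvPolynomial (Fin s) (T ⧸ M)) :=
    Ideal.span {p | ∃ i, p = MvPolynomial.X i ^ 2 - MvPolynomial.C (ab i)} with hIK_def
  -- instances on the K side
  have h2K : IsUnit (2 : T ⧸ M) := by
    have := h2.map (Ideal.Quotient.mk M); rwa [map_ofNat] at this
  haveI hredK : IsReduced (MvPolynomial (Fin s) (T ⧸ M) ⧸ IK) :=
    aux_mv_reduced s h2K ab (fun i => (a i).isUnit.map (Ideal.Quotient.mk M))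
  haveI hfinK : Module.Finite (T ⧸ M) (MvPolynomial (Fin s) (T ⧸ M) ⧸ IK) :=
    aux_mv_finite s ab
  haveI hartK : IsArtinianRing (MvPolynomial (Fin s) (T ⧸ M) ⧸ IK) :=
    IsArtinianRing.of_finite (T ⧸ M) _
  -- jacobson of the K side is ⊥
  have hJK : Ideal.jacobson (⊥ : Ideal (MvPolynomial (Fin s) (T ⧸ M) ⧸ IK)) = ⊥ := by
    obtain ⟨n, hn⟩ := IsArtinianRing.isNilpotent_jacobson_bot
      (R := MvPolynomial (Fin s) (T ⧸ M) ⧸ IK)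
    rw [eq_bot_iff]
    intro x hx
    have hxn := Ideal.pow_mem_pow hx n
    rw [hn] at hxn
    have : x ^ n = 0 := by simpa using hxn
    have : x = 0 := IsNilpotent.eq_zero ⟨n, this⟩
    simp [this]
  -- instances on the T side
  haveI hfinT : Module.Finite T (MvPolynomial (Fin s) T ⧸ I) :=
    aux_mv_finite s (fun i => (a i : T))
  haveI hintT : Algebra.IsIntegral T (MvPolynomial (Fin s) T ⧸ I) := inferInstance
  -- the equivalence E between the two quotients
  have halg : algebraMap T (MvPolynomial (Fin s) T ⧸ I)
      = (Ideal.Quotient.mk I).comp (MvPolynomial.C) := rfl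
  have hMmap : M.map (algebraMap T (MvPolynomial (Fin s) T ⧸ I))
      = (M.map (MvPolynomial.C : T →+* MvPolynomial (Fin s) T)).map (Ideal.Quotient.mk I) := by
    rw [halg, ← Ideal.map_map]
  have Ea := DoubleQuot.quotQuotEquivComm I
    (M.map (MvPolynomial.C : T →+* MvPolynomial (Fin s) T))
  set eM : (MvPolynomial (Fin s) T ⧸ Ideal.map MvPolynomial.C M)
      ≃+* MvPolynomial (Fin s) (T ⧸ M) :=
    (MvPolynomial.quotientEquivQuotientMvPolynomial (σ := Fin s) M).symm.toRingEquiv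
    with heM_def
  have hgen : ∀ i : Fin s, (eM : _ →+* _)
      ((Ideal.Quotient.mk (Ideal.map MvPolynomial.C M))
        (MvPolynomial.X i ^ 2 - MvPolynomial.C (a i : T)))
      = MvPolynomial.X i ^ 2 - MvPolynomial.C (ab i) := by
    intro i
    show eM ((Ideal.Quotient.mk (Ideal.map MvPolynomial.C M))
      (MvPolynomial.X i ^ 2 - MvPolynomial.C (a i : T))) = _
    have h1 : eM ((Ideal.Quotient.mk (Ideal.map MvPolynomial.C M))
        (MvPolynomial.X i ^ 2 - MvPolynomial.C (a i : T)))
        = MvPolynomial.map (Ideal.Quotient.mk M)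
          (MvPolynomial.X i ^ 2 - MvPolynomial.C (a i : T)) := by
        simp [heM_def, MvPolynomial.quotientEquivQuotientMvPolynomial]
    rw [h1, map_sub, map_pow, MvPolynomial.map_X, MvPolynomial.map_C]
  have hIKmap : (I.map (Ideal.Quotient.mk (Ideal.map MvPolynomial.C M))).map
      ((eM : _ →+* _)) = IK := by
    rw [hI_def, Ideal.map_span, Ideal.map_span, hIK_def]
    congr 1
    ext q
    constructor
    · rintro ⟨p', ⟨p, ⟨i, rfl⟩, rfl⟩, rfl⟩
      exact ⟨i, (hgen i).symm ▸ (hgen i)⟩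
    · rintro ⟨i, rfl⟩
      exact ⟨(Ideal.Quotient.mk (Ideal.map MvPolynomial.C M))
        (MvPolynomial.X i ^ 2 - MvPolynomial.C (a i : T)),
        ⟨MvPolynomial.X i ^ 2 - MvPolynomial.C (a i : T), ⟨i, rfl⟩, rfl⟩, hgen i⟩
  have E : ((MvPolynomial (Fin s) T ⧸ I) ⧸
        M.map (algebraMap T (MvPolynomial (Fin s) T ⧸ I)))
      ≃+* (MvPolynomial (Fin s) (T ⧸ M) ⧸ IK) :=
    (Ideal.quotEquivOfEq hMmap).trans (Ea.trans
      (Ideal.quotientEquiv _ IK eM hIKmap.symm))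
  -- jacobson of the quotient is ⊥
  have hQJ : Ideal.jacobson (⊥ : Ideal ((MvPolynomial (Fin s) T ⧸ I) ⧸
      M.map (algebraMap T (MvPolynomial (Fin s) T ⧸ I)))) = ⊥ := by
    rw [eq_bot_iff]
    intro x hx
    replace hx := (Ideal.mem_jacobson_bot (R := (MvPolynomial (Fin s) T ⧸ I) ⧸
      M.map (algebraMap T (MvPolynomial (Fin s) T ⧸ I)))).mp hx
    have hEx : E x ∈ Ideal.jacobson (⊥ : Ideal (MvPolynomial (Fin s) (T ⧸ M) ⧸ IK)) := by
      refine (Ideal.mem_jacobson_bot (R := MvPolynomial (Fin s) (T ⧸ M) ⧸ IK)).mpr ?_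
      intro y
      have hu := (hx (E.symm y)).map E.toRingHom
      simp only [map_add, map_mul, map_one, RingEquiv.toRingHom_eq_coe,
        RingHom.coe_coe, RingEquiv.apply_symm_apply] at hu
      exact hu
    rw [hJK] at hEx
    have : E x = 0 := by simpa using hEx
    have : x = 0 := by
      apply E.injective
      simpa using this
    simp [this]
  -- every maximal ideal of the T-side quotient contains M·S
  have hmax : ∀ J : Ideal (MvPolynomial (Fin s) T ⧸ I), J.IsMaximal →
      M.map (algebraMap T (MvPolynomial (Fin s) T ⧸ I)) ≤ J := by
    intro J hJ
    haveI := hJ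
    have hcm : (J.comap (algebraMap T (MvPolynomial (Fin s) T ⧸ I))).IsMaximal :=
      Ideal.isMaximal_comap_of_isIntegral_of_isMaximal J
    have hM : J.comap (algebraMap T (MvPolynomial (Fin s) T ⧸ I)) = M :=
      IsLocalRing.eq_maximalIdeal hcm
    exact Ideal.map_le_iff_le_comap.mpr hM.ge
  constructor
  · -- finiteness of the maximal spectrum
    haveI : Finite {J : Ideal (MvPolynomial (Fin s) (T ⧸ M) ⧸ IK) | J.IsMaximal} :=
      (IsArtinianRing.setOfPred_isMaximal_finite (MvPolynomial (Fin s) (T ⧸ M) ⧸ IK)).to_subtype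
    set mkQ := Ideal.Quotient.mk (M.map (algebraMap T (MvPolynomial (Fin s) T ⧸ I)))
      with hmkQ_def
    have hFmax : ∀ n : MaximalSpectrum (MvPolynomial (Fin s) T ⧸ I),
        (n.asIdeal.map mkQ).IsMaximal := by
      intro n
      rcases Ideal.map_eq_top_or_isMaximal_of_surjective mkQ
        Ideal.Quotient.mk_surjective n.isMaximal with htop | h
      · exfalso
        have := congrArg (Ideal.comap mkQ) htop
        rw [Ideal.comap_top, Ideal.comap_map_of_surjective mkQ
          Ideal.Quotient.mk_surjective] at this
        rw [← RingHom.ker_eq_comap_bot, Ideal.mk_ker] at this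
        rw [sup_eq_left.mpr (hmax n.asIdeal n.isMaximal)] at this
        exact n.isMaximal.ne_top this
      · exact h
    have hF : Function.Injective (fun n : MaximalSpectrum (MvPolynomial (Fin s) T ⧸ I) =>
        (⟨(n.asIdeal.map mkQ).comap E.symm.toRingHom, by
          haveI := hFmax n
          exact Ideal.comap_isMaximal_of_surjective _ E.symm.surjective⟩ :
          {J : Ideal (MvPolynomial (Fin s) (T ⧸ M) ⧸ IK) | J.IsMaximal})) := by
      intro n n' h
      have h1 : (n.asIdeal.map mkQ).comap E.symm.toRingHom
          = (n'.asIdeal.map mkQ).comap E.symm.toRingHom := congrArg Subtype.val h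
      have h2 : n.asIdeal.map mkQ = n'.asIdeal.map mkQ :=
        Ideal.comap_injective_of_surjective _ E.symm.surjective h1
      have h3 := congrArg (Ideal.comap mkQ) h2
      rw [Ideal.comap_map_of_surjective mkQ Ideal.Quotient.mk_surjective,
        Ideal.comap_map_of_surjective mkQ Ideal.Quotient.mk_surjective,
        ← RingHom.ker_eq_comap_bot, Ideal.mk_ker,
        sup_eq_left.mpr (hmax n.asIdeal n.isMaximal),
        sup_eq_left.mpr (hmax n'.asIdeal n'.isMaximal)] at h3
      exact MaximalSpectrum.ext h3
    exact Finite.of_injective _ hF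
  · -- jacobson = M·S
    have hjac_eq : Ideal.jacobson (⊥ : Ideal (MvPolynomial (Fin s) T ⧸ I))
        = Ideal.jacobson (M.map (algebraMap T (MvPolynomial (Fin s) T ⧸ I))) := by
      simp only [Ideal.jacobson]
      congr 1
      ext J
      simp only [Set.mem_setOf_eq, bot_le, true_and]
      exact ⟨fun h => ⟨hmax J h, h⟩, fun h => h.2⟩
    rw [hjac_eq]
    exact Ideal.jacobson_eq_iff_jacobson_quotient_eq_bot.mpr hQJ

/-- Let `F` be a field of characteristic not 2, `T` a commutative local `F`-algebra with maximal
ideal `M` and residue field `K = T/M`, and `a₁, ..., aₛ` units of `T`.  Then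
`S = T[x₁,...,xₛ]/(x₁² - a₁, ..., xₛ² - aₛ)` is semilocal (finitely many maximal ideals) and its
Jacobson radical is `M·S`. -/
theorem adjoin_sqrts_semilocal_jacobson (F T : Type*) [Field F] (hF : (2 : F) ≠ 0)
    [CommRing T] [Algebra F T] [IsLocalRing T] (s : ℕ) (a : Fin s → Tˣ) :
    Finite (MaximalSpectrum (MvPolynomial (Fin s) T ⧸
        Ideal.span {p : MvPolynomial (Fin s) T | ∃ i, p = X i ^ 2 - C (a i : T)})) ∧
      Ideal.jacobson (⊥ : Ideal (MvPolynomial (Fin s) T ⧸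
          Ideal.span {p : MvPolynomial (Fin s) T | ∃ i, p = X i ^ 2 - C (a i : T)})) =
        Ideal.map (algebraMap T (MvPolynomial (Fin s) T ⧸
            Ideal.span {p : MvPolynomial (Fin s) T | ∃ i, p = X i ^ 2 - C (a i : T)}))
          (IsLocalRing.maximalIdeal T) := by
  have h2 : IsUnit (2 : T) := by
    have hu : IsUnit (2 : F) := isUnit_iff_ne_zero.mpr hF
    have := hu.map (algebraMap F T)
    rwa [map_ofNat] at this
  exact main_aux T h2 s a
end

section
/- Let T be a commutative local ring in which 2 is invertible, with residue field K, and let a be a unit of T with image ā in K. Then S = T[x]/(x² - a) modulo its Jacobson radical is isomorphic to K[x]/(x² - ā). -/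
open Polynomial

/-- Let `T` be a commutative local ring with `2` invertible and residue field `K`, and let `a` be
a unit of `T` with image `ā` in `K`.  Then `S = T[x]/(x² - a)` modulo its Jacobson radical is
isomorphic to `K[x]/(x² - ā)`. -/
theorem adjoinRoot_mod_jacobson (T : Type*) [CommRing T] [IsLocalRing T]
    (h2 : IsUnit (2 : T)) (a : T) (ha : IsUnit a) :
    Nonempty
      ((AdjoinRoot (X ^ 2 - C a) ⧸ Ideal.jacobson (⊥ : Ideal (AdjoinRoot (X ^ 2 - C a)))) ≃+*
        AdjoinRoot (X ^ 2 - C (IsLocalRing.residue T a))) := by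
  set f : T[X] := X ^ 2 - C a with hf
  have hmonic : f.Monic := monic_X_pow_sub_C a two_ne_zero
  set m := IsLocalRing.maximalIdeal T with hm
  set S := AdjoinRoot f with hS
  set I : Ideal S := m.map (AdjoinRoot.of f) with hI
  -- the residue field data
  set K := IsLocalRing.ResidueField T with hK
  have hresa : IsUnit (IsLocalRing.residue T a) := ha.map _
  have hres2 : (2 : K) ≠ 0 := by
    have h := (h2.map (IsLocalRing.residue T)).ne_zero
    rwa [map_ofNat] at h
  -- the polynomial over the residue field
  have hmap : f.map (Ideal.Quotient.mk m) = X ^ 2 - C (IsLocalRing.residue T a) := by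
    simp [hf]
    rfl
  -- the equivalence S/I ≃ K[x]/(x²-ā)
  have e : (S ⧸ I) ≃+* AdjoinRoot (X ^ 2 - C (IsLocalRing.residue T a)) :=
    (AdjoinRoot.quotAdjoinRootEquivQuotPolynomialQuot m f).trans
      (Ideal.quotEquivOfEq (R := (T ⧸ m)[X]) (J := Ideal.span {@HSub.hSub (T ⧸ m)[X] (T ⧸ m)[X] (T ⧸ m)[X] _ (X ^ 2) (C (Ideal.Quotient.mk m a))}) (by rw [hmap]; rfl))
  -- the target ring is reduced
  have hsep : (X ^ 2 - C (IsLocalRing.residue T a)).Separable := by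
    apply separable_X_pow_sub_C _ _ hresa.ne_zero
    simpa using hres2
  have hsf : Squarefree (X ^ 2 - C (IsLocalRing.residue T a)) := hsep.squarefree
  have hne : (X ^ 2 - C (IsLocalRing.residue T a)) ≠ 0 :=
    (monic_X_pow_sub_C _ two_ne_zero).ne_zero
  have hred : IsReduced (AdjoinRoot (X ^ 2 - C (IsLocalRing.residue T a))) := by
    have : IsRadical (X ^ 2 - C (IsLocalRing.residue T a)) :=
      (isRadical_iff_squarefree_of_ne_zero hne).mpr hsf
    exact (Ideal.isRadical_iff_quotient_reduced _).mp (isRadical_iff_span_singleton.mp this)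
  -- transfer to S/I
  have hredSI : IsReduced (S ⧸ I) := isReduced_of_injective e e.injective
  have hjacT : IsJacobsonRing (AdjoinRoot (X ^ 2 - C (IsLocalRing.residue T a))) :=
    inferInstanceAs (IsJacobsonRing (K[X] ⧸ Ideal.span {X ^ 2 - C (IsLocalRing.residue T a)}))
  have hjacSI : IsJacobsonRing (S ⧸ I) := (isJacobsonRing_iso e).mpr hjacT
  -- I is radical-stable, so jacobson I = I
  have hIjac : I.jacobson = I := by
    rw [Ideal.jacobson_eq_iff_jacobson_quotient_eq_bot]
    have hbotrad : (⊥ : Ideal (S ⧸ I)).IsRadical :=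
      show Ideal.radical ⊥ ≤ ⊥ from (nilradical_eq_zero _).le
    exact hjacSI.out hbotrad
  -- integrality of S over T
  have hfin : Module.Finite T S := (AdjoinRoot.powerBasis' hmonic).finite
  have hint : Algebra.IsIntegral T S := Algebra.IsIntegral.of_finite T S
  -- the Jacobson radical of S equals I
  have hkey : Ideal.jacobson (⊥ : Ideal S) = I := by
    refine le_antisymm ?_ ?_
    · calc Ideal.jacobson (⊥ : Ideal S) ≤ I.jacobson :=
            Ideal.jacobson_mono bot_le
        _ = I := hIjac
    · rw [Ideal.jacobson]
      refine le_sInf ?_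
      rintro J ⟨-, hJ⟩
      rw [hI, Ideal.map_le_iff_le_comap]
      have hcm : (J.comap (AdjoinRoot.of f)).IsMaximal := by
        have : (J.comap (algebraMap T S)).IsMaximal :=
          Ideal.isMaximal_comap_of_isIntegral_of_isMaximal J
        exact this
      exact le_of_eq (IsLocalRing.eq_maximalIdeal hcm).symm
  exact ⟨(Ideal.quotEquivOfEq hkey).trans e⟩
end

section
/- Let R be a commutative ring containing 1/2 and let a, b be units of R. Then (a,b)_R ⊗_R (a,b)_R is isomorphic to the matrix algebra M₄(R); in particular the class of (a,b)_R in the Brauer group of R has order dividing 2. -/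
open Quaternion

namespace QuatTensorAux

variable {R : Type*} [CommRing R] (a b : R)

/-- Matrix of left multiplication by `α` on basis `1, α, β, αβ` of `(a,b)_R`. -/
def La : Matrix (Fin 4) (Fin 4) R := !![0,a,0,0; 1,0,0,0; 0,0,0,a; 0,0,1,0]
/-- Left multiplication by `β`. -/
def Lb : Matrix (Fin 4) (Fin 4) R := !![0,0,b,0; 0,0,0,-b; 1,0,0,0; 0,-1,0,0]
/-- Left multiplication by `αβ`. -/
def Lk : Matrix (Fin 4) (Fin 4) R := !![0,0,0,-(a*b); 0,0,b,0; 0,-a,0,0; 1,0,0,0]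
/-- Right multiplication by `-α`. -/
def Ra : Matrix (Fin 4) (Fin 4) R := !![0,-a,0,0; -1,0,0,0; 0,0,0,a; 0,0,1,0]
/-- Right multiplication by `-β`. -/
def Rb : Matrix (Fin 4) (Fin 4) R := !![0,0,-b,0; 0,0,0,-b; -1,0,0,0; 0,-1,0,0]
/-- Right multiplication by `βα`. -/
def Rk : Matrix (Fin 4) (Fin 4) R := !![0,0,0,a*b; 0,0,b,0; 0,-a,0,0; -1,0,0,0]

set_option maxHeartbeats 1000000 in
/-- A "quaternionic basis" of `M₄(R)` through left multiplications. -/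
def fB : QuaternionAlgebra.Basis (Matrix (Fin 4) (Fin 4) R) a 0 b where
  i := La a
  j := Lb b
  k := Lk a b
  i_mul_i := by
    ext i j
    fin_cases i <;> fin_cases j <;>
      simp [La, Matrix.mul_apply, Fin.sum_univ_four, Matrix.one_apply,
        Matrix.vecHead, Matrix.vecTail]
  j_mul_j := by
    ext i j
    fin_cases i <;> fin_cases j <;>
      simp [Lb, Matrix.mul_apply, Fin.sum_univ_four, Matrix.one_apply,
        Matrix.vecHead, Matrix.vecTail]
  i_mul_j := by
    ext i j
    fin_cases i <;> fin_cases j <;>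
      (simp [La, Lb, Lk, Matrix.mul_apply, Fin.sum_univ_four, Matrix.vecHead, Matrix.vecTail];
        try ring)
  j_mul_i := by
    ext i j
    fin_cases i <;> fin_cases j <;>
      (simp [La, Lb, Lk, Matrix.mul_apply, Fin.sum_univ_four, Matrix.vecHead, Matrix.vecTail];
        try ring)

set_option maxHeartbeats 1000000 in
/-- A "quaternionic basis" of `M₄(R)` through right multiplications by conjugates. -/
def gB : QuaternionAlgebra.Basis (Matrix (Fin 4) (Fin 4) R) a 0 b where
  i := Ra a
  j := Rb b
  k := Rk a b
  i_mul_i := by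
    ext i j
    fin_cases i <;> fin_cases j <;>
      simp [Ra, Matrix.mul_apply, Fin.sum_univ_four, Matrix.one_apply,
        Matrix.vecHead, Matrix.vecTail]
  j_mul_j := by
    ext i j
    fin_cases i <;> fin_cases j <;>
      simp [Rb, Matrix.mul_apply, Fin.sum_univ_four, Matrix.one_apply,
        Matrix.vecHead, Matrix.vecTail]
  i_mul_j := by
    ext i j
    fin_cases i <;> fin_cases j <;>
      (simp [Ra, Rb, Rk, Matrix.mul_apply, Fin.sum_univ_four, Matrix.vecHead, Matrix.vecTail];
        try ring)
  j_mul_i := by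
    ext i j
    fin_cases i <;> fin_cases j <;>
      (simp [Ra, Rb, Rk, Matrix.mul_apply, Fin.sum_univ_four, Matrix.vecHead, Matrix.vecTail];
        try ring)

section commute

set_option maxHeartbeats 1000000 in
lemma commute_LR (p : Matrix (Fin 4) (Fin 4) R)
    (hp : p = La a ∨ p = Lb b ∨ p = Lk a b) (q : Matrix (Fin 4) (Fin 4) R)
    (hq : q = Ra a ∨ q = Rb b ∨ q = Rk a b) : Commute p q := by
  show p * q = q * p
  obtain rfl | rfl | rfl := hp <;> obtain rfl | rfl | rfl := hq <;>
    · ext i j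
      fin_cases i <;> fin_cases j <;>
        (simp [La, Lb, Lk, Ra, Rb, Rk, Matrix.mul_apply, Fin.sum_univ_four,
          Matrix.vecHead, Matrix.vecTail]; try ring)

lemma commute_lift (x y : ℍ[R,a,b]) :
    Commute ((fB a b).liftHom x) ((gB a b).liftHom y) := by
  have key : ∀ q : Matrix (Fin 4) (Fin 4) R,
      Commute (La a) q → Commute (Lb b) q → Commute (Lk a b) q →
      Commute ((fB a b).liftHom x) q := by
    intro q h1 h2 h3
    show Commute (algebraMap R _ x.re + x.imI • (fB a b).i + x.imJ • (fB a b).j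
      + x.imK • (fB a b).k) q
    rw [Algebra.algebraMap_eq_smul_one]
    exact ((((Commute.one_left q).smul_left _).add_left (h1.smul_left _)).add_left
      (h2.smul_left _)).add_left (h3.smul_left _)
  have key2 : ∀ p : Matrix (Fin 4) (Fin 4) R,
      Commute p (Ra a) → Commute p (Rb b) → Commute p (Rk a b) →
      Commute p ((gB a b).liftHom y) := by
    intro p h1 h2 h3
    show Commute p (algebraMap R _ y.re + y.imI • (gB a b).i + y.imJ • (gB a b).j
      + y.imK • (gB a b).k)
    rw [Algebra.algebraMap_eq_smul_one]
    exact ((((Commute.one_right p).smul_right _).add_right (h1.smul_right _)).add_right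
      (h2.smul_right _)).add_right (h3.smul_right _)
  refine key _ ?_ ?_ ?_ <;>
    refine key2 _ ?_ ?_ ?_ <;>
      exact commute_LR a b _ (by simp [fB, gB]) _ (by simp [fB, gB])

end commute

end QuatTensorAux

namespace QuatTensorAux

section stdBasis

variable {R : Type*} [CommRing R] (a b : R)

/-- `E r s` is the matrix unit. -/
def E (r s : Fin 4) : Matrix (Fin 4) (Fin 4) R := Matrix.single r s 1

set_option maxHeartbeats 1000000 in
lemma key_E00 : (a • (1 : Matrix (Fin 4) (Fin 4) R) - La a * Ra a) *
    (b • (1 : Matrix (Fin 4) (Fin 4) R) - Lb b * Rb b) = (4 * (a * b)) • E 0 0 := by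
  ext i j
  fin_cases i <;> fin_cases j <;>
    (simp [La, Lb, Ra, Rb, E, Matrix.mul_apply, Fin.sum_univ_four, Matrix.one_apply,
      Matrix.single, Matrix.vecHead, Matrix.vecTail]; try ring)

lemma key_E10 : La a * (E 0 0 : Matrix (Fin 4) (Fin 4) R) = E 1 0 := by
  ext i j
  fin_cases i <;> fin_cases j <;>
    simp [La, E, Matrix.mul_apply, Fin.sum_univ_four, Matrix.single,
      Matrix.vecHead, Matrix.vecTail]

lemma key_E20 : Lb b * (E 0 0 : Matrix (Fin 4) (Fin 4) R) = E 2 0 := by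
  ext i j
  fin_cases i <;> fin_cases j <;>
    simp [Lb, E, Matrix.mul_apply, Fin.sum_univ_four, Matrix.single,
      Matrix.vecHead, Matrix.vecTail]

lemma key_E30 : La a * (E 2 0 : Matrix (Fin 4) (Fin 4) R) = E 3 0 := by
  ext i j
  fin_cases i <;> fin_cases j <;>
    simp [La, E, Matrix.mul_apply, Fin.sum_univ_four, Matrix.single,
      Matrix.vecHead, Matrix.vecTail]

lemma key_E01 : (E 0 0 : Matrix (Fin 4) (Fin 4) R) * La a = a • E 0 1 := by
  ext i j
  fin_cases i <;> fin_cases j <;>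
    simp [La, E, Matrix.mul_apply, Fin.sum_univ_four, Matrix.single,
      Matrix.vecHead, Matrix.vecTail]

lemma key_E02 : (E 0 0 : Matrix (Fin 4) (Fin 4) R) * Lb b = b • E 0 2 := by
  ext i j
  fin_cases i <;> fin_cases j <;>
    simp [Lb, E, Matrix.mul_apply, Fin.sum_univ_four, Matrix.single,
      Matrix.vecHead, Matrix.vecTail]

lemma key_E03 : (E 0 1 : Matrix (Fin 4) (Fin 4) R) * Lb b = (-b) • E 0 3 := by
  ext i j
  fin_cases i <;> fin_cases j <;>
    simp [Lb, E, Matrix.mul_apply, Fin.sum_univ_four, Matrix.single,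
      Matrix.vecHead, Matrix.vecTail]

lemma E_mul_E (r s : Fin 4) : (E r 0 : Matrix (Fin 4) (Fin 4) R) * E 0 s = E r s := by
  rw [E, E, E, Matrix.single_mul_single_same, one_mul]

end stdBasis

end QuatTensorAux

open QuatTensorAux in
/-- For a commutative ring `R` containing `1/2` and units `a`, `b`, the tensor product
`(a,b)_R ⊗_R (a,b)_R` is isomorphic to the matrix algebra `M₄(R)`; in particular the class of
`(a,b)_R` in the Brauer group of `R` has order dividing 2. -/
theorem quaternionAlgebra_tensor_self_iso_matrix (R : Type*) [CommRing R]
    (h2 : IsUnit (2 : R)) (a b : R) (ha : IsUnit a) (hb : IsUnit b) :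
    Nonempty ((TensorProduct R ℍ[R, a, b] ℍ[R, a, b]) ≃ₐ[R] Matrix (Fin 4) (Fin 4) R) := by
  obtain ⟨a', ha'⟩ := ha.exists_right_inv
  obtain ⟨b', hb'⟩ := hb.exists_right_inv
  obtain ⟨t, ht⟩ := h2.exists_right_inv
  let φ : TensorProduct R ℍ[R,a,b] ℍ[R,a,b] →ₐ[R] Matrix (Fin 4) (Fin 4) R :=
    Algebra.TensorProduct.lift (fB a b).liftHom (gB a b).liftHom (commute_lift a b)
  -- the four generating matrices are in the range of `φ`
  have hLa : La a ∈ φ.range := ⟨(⟨0,1,0,0⟩ : ℍ[R,a,b]) ⊗ₜ 1, by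
    simp [φ, Algebra.TensorProduct.lift_tmul, QuaternionAlgebra.Basis.liftHom_apply,
      QuaternionAlgebra.Basis.lift, fB]⟩
  have hLb : Lb b ∈ φ.range := ⟨(⟨0,0,1,0⟩ : ℍ[R,a,b]) ⊗ₜ 1, by
    simp [φ, Algebra.TensorProduct.lift_tmul, QuaternionAlgebra.Basis.liftHom_apply,
      QuaternionAlgebra.Basis.lift, fB]⟩
  have hRa : Ra a ∈ φ.range := ⟨(1 : ℍ[R,a,b]) ⊗ₜ ⟨0,1,0,0⟩, by
    simp [φ, Algebra.TensorProduct.lift_tmul, QuaternionAlgebra.Basis.liftHom_apply,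
      QuaternionAlgebra.Basis.lift, gB]⟩
  have hRb : Rb b ∈ φ.range := ⟨(1 : ℍ[R,a,b]) ⊗ₜ ⟨0,0,1,0⟩, by
    simp [φ, Algebra.TensorProduct.lift_tmul, QuaternionAlgebra.Basis.liftHom_apply,
      QuaternionAlgebra.Basis.lift, gB]⟩
  -- hence so are all the matrix units
  have hE00 : (E 0 0 : Matrix (Fin 4) (Fin 4) R) ∈ φ.range := by
    have hscal : (t * t) * (a' * b') * (4 * (a * b)) = 1 := by
      have h : (t * t) * (a' * b') * (4 * (a * b)) = ((2*t) * (2*t)) * ((a*a') * (b*b')) := by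
        ring
      rw [h, ht, ha', hb']; ring
    have h : ((t * t) * (a' * b')) • ((a • (1 : Matrix (Fin 4) (Fin 4) R) - La a * Ra a) *
        (b • (1 : Matrix (Fin 4) (Fin 4) R) - Lb b * Rb b)) = E 0 0 := by
      rw [key_E00, smul_smul, hscal, one_smul]
    rw [← h]
    exact Subalgebra.smul_mem _ (mul_mem
      (sub_mem (Subalgebra.smul_mem _ (one_mem _) _) (mul_mem hLa hRa))
      (sub_mem (Subalgebra.smul_mem _ (one_mem _) _) (mul_mem hLb hRb))) _
  have hcol : ∀ r : Fin 4, (E r 0 : Matrix (Fin 4) (Fin 4) R) ∈ φ.range := by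
    intro r; fin_cases r
    · exact hE00
    · show (E 1 0 : Matrix (Fin 4) (Fin 4) R) ∈ φ.range
      rw [← key_E10]; exact mul_mem hLa hE00
    · show (E 2 0 : Matrix (Fin 4) (Fin 4) R) ∈ φ.range
      rw [← key_E20]; exact mul_mem hLb hE00
    · show (E 3 0 : Matrix (Fin 4) (Fin 4) R) ∈ φ.range
      rw [← key_E30, ← key_E20]; exact mul_mem hLa (mul_mem hLb hE00)
  have hE01 : (E 0 1 : Matrix (Fin 4) (Fin 4) R) ∈ φ.range := by
    have h : (E 0 1 : Matrix (Fin 4) (Fin 4) R) = a' • ((E 0 0) * La a) := by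
      rw [key_E01, smul_smul, mul_comm a' a, ha', one_smul]
    rw [h]; exact Subalgebra.smul_mem _ (mul_mem hE00 hLa) _
  have hrow : ∀ s : Fin 4, (E 0 s : Matrix (Fin 4) (Fin 4) R) ∈ φ.range := by
    intro s; fin_cases s
    · exact hE00
    · exact hE01
    · show (E 0 2 : Matrix (Fin 4) (Fin 4) R) ∈ φ.range
      have h : (E 0 2 : Matrix (Fin 4) (Fin 4) R) = b' • ((E 0 0) * Lb b) := by
        rw [key_E02, smul_smul, mul_comm b' b, hb', one_smul]
      rw [h]; exact Subalgebra.smul_mem _ (mul_mem hE00 hLb) _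
    · show (E 0 3 : Matrix (Fin 4) (Fin 4) R) ∈ φ.range
      have h : (E 0 3 : Matrix (Fin 4) (Fin 4) R) = (-b') • ((E 0 1) * Lb b) := by
        rw [key_E03, smul_smul, neg_mul_neg, mul_comm b' b, hb', one_smul]
      rw [h]; exact Subalgebra.smul_mem _ (mul_mem hE01 hLb) _
  have hE : ∀ r s : Fin 4, (E r s : Matrix (Fin 4) (Fin 4) R) ∈ φ.range := by
    intro r s
    rw [← E_mul_E]
    exact mul_mem (hcol r) (hrow s)
  have hsurj : Function.Surjective φ := by
    intro M
    have hM : M ∈ φ.range := by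
      rw [Matrix.matrix_eq_sum_single M]
      refine sum_mem fun r _ => sum_mem fun s _ => ?_
      have h : Matrix.single r s (M r s) = (M r s) • E r s := by
        rw [E, Matrix.smul_single, smul_eq_mul, mul_one]
      rw [h]
      exact Subalgebra.smul_mem _ (hE r s) _
    obtain ⟨x, hx⟩ := hM
    exact ⟨x, hx⟩
  have hinj : Function.Injective φ := by
    let bH := QuaternionAlgebra.basisOneIJK (R := R) a 0 b
    let e : TensorProduct R ℍ[R,a,b] ℍ[R,a,b] ≃ₗ[R] Matrix (Fin 4) (Fin 4) R :=
      (bH.tensorProduct bH).equiv (Matrix.stdBasis R (Fin 4) (Fin 4)) (Equiv.refl _)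
    exact OrzechProperty.injective_of_surjective_of_injective e.toLinearMap φ.toLinearMap
      e.injective hsurj
  exact ⟨AlgEquiv.ofBijective φ ⟨hinj, hsurj⟩⟩
end

section
/- Let T be a commutative ring, A an Azumaya T-algebra, and e a nonzero idempotent of A such that eAe ⊗_T κ(m) ≠ 0 for every maximal ideal m of T. Then eAe is an Azumaya T-algebra Brauer equivalent to A. -/
open TensorProduct

/-- The canonical map `A ⊗_R Aᵐᵒᵖ →ₗ[R] End_R A`, `a ⊗ bᵒᵖ ↦ (x ↦ a * x * b)`. -/
noncomputable def azumayaMap (R A : Type*) [CommRing R] [Ring A] [Algebra R A] :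
    A ⊗[R] Aᵐᵒᵖ →ₗ[R] Module.End R A :=
  TensorProduct.lift <|
    LinearMap.mk₂ R
      (fun a b => (LinearMap.mulLeft R a).comp (LinearMap.mulRight R (MulOpposite.unop b)))
      (fun a a' b => by ext x; simp [add_mul])
      (fun r a b => by ext x; simp [smul_mul_assoc])
      (fun a b b' => by ext x; simp [mul_add])
      (fun r a b => by ext x; simp [mul_smul_comm])

/-- An `R`-algebra `A` is Azumaya if it is a finitely generated projective faithful `R`-module
and the natural map `A ⊗_R Aᵐᵒᵖ → End_R A` is bijective. -/
def IsAzumayaAlgebra (R A : Type*) [CommRing R] [Ring A] [Algebra R A] : Prop :=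
  Module.Finite R A ∧ Module.Projective R A ∧ FaithfulSMul R A ∧
    Function.Bijective (azumayaMap R A)

variable {A : Type*} [Ring A]

/-- The corner ring `eAe` of a ring `A` at an idempotent `e`. -/
@[ext]
structure Corner (e : A) (he : IsIdempotentElem e) where
  /-- the underlying element of `A` -/
  val : A
  /-- membership in the corner `eAe` -/
  property : e * val * e = val

namespace Corner

variable {e : A} {he : IsIdempotentElem e}

theorem e_mul (he : IsIdempotentElem e) {a : A} (ha : e * a * e = a) : e * a = a := by
  conv_lhs => rw [← ha]
  rw [← mul_assoc, ← mul_assoc, he.eq, ha]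

theorem mul_e (he : IsIdempotentElem e) {a : A} (ha : e * a * e = a) : a * e = a := by
  conv_lhs => rw [← ha]
  rw [mul_assoc, mul_assoc, he.eq, ← mul_assoc, ha]

instance : Zero (Corner e he) := ⟨⟨0, by simp⟩⟩
instance : Add (Corner e he) :=
  ⟨fun x y => ⟨x.val + y.val, by rw [mul_add, add_mul, x.property, y.property]⟩⟩
instance : Neg (Corner e he) := ⟨fun x => ⟨-x.val, by rw [mul_neg, neg_mul, x.property]⟩⟩
instance : One (Corner e he) := ⟨⟨e, by rw [he.eq, he.eq]⟩⟩
instance : Mul (Corner e he) :=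
  ⟨fun x y => ⟨x.val * y.val, by
    conv_rhs => rw [← e_mul he x.property, ← mul_e he y.property]
    simp [mul_assoc]⟩⟩

instance : Ring (Corner e he) :=
  Ring.ofMinimalAxioms
    (fun a b c => Corner.ext (add_assoc a.val b.val c.val))
    (fun a => Corner.ext (zero_add a.val))
    (fun a => Corner.ext (neg_add_cancel a.val))
    (fun a b c => Corner.ext (mul_assoc a.val b.val c.val))
    (fun a => Corner.ext (e_mul he a.property))
    (fun a => Corner.ext (mul_e he a.property))
    (fun a b c => Corner.ext (mul_add a.val b.val c.val))
    (fun a b c => Corner.ext (add_mul a.val b.val c.val))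

variable (T : Type*) [CommRing T] [Algebra T A]

theorem mem_corner_algebraMap (he : IsIdempotentElem e) (t : T) :
    e * (algebraMap T A t * e) * e = algebraMap T A t * e := by
  rw [mul_assoc, mul_assoc, he.eq, ← mul_assoc, ← Algebra.commutes t e, mul_assoc, he.eq]

/-- The corner ring `eAe` is a `T`-algebra when `A` is. -/
noncomputable instance : Algebra T (Corner e he) :=
  RingHom.toAlgebra'
    { toFun := fun t => (⟨algebraMap T A t * e, mem_corner_algebraMap T he t⟩ : Corner e he)
      map_one' := by
        apply Corner.ext
        exact (by simp : algebraMap T A 1 * e = e)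
      map_mul' := fun s t => by
        apply Corner.ext
        exact (by
          rw [map_mul, mul_assoc (algebraMap T A s) e, ← mul_assoc e (algebraMap T A t) e,
            ← Algebra.commutes t e, mul_assoc (algebraMap T A t) e e, he.eq, mul_assoc] :
          algebraMap T A (s * t) * e = (algebraMap T A s * e) * (algebraMap T A t * e))
      map_zero' := by
        apply Corner.ext
        exact (by simp : algebraMap T A 0 * e = 0)
      map_add' := fun s t => by
        apply Corner.ext
        exact (by rw [map_add, add_mul] :
          algebraMap T A (s + t) * e = algebraMap T A s * e + algebraMap T A t * e) }
    (fun c x => by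
      apply Corner.ext
      exact (by
        rw [mul_assoc, e_mul he x.property, ← mul_assoc, ← Algebra.commutes c x.val,
          mul_assoc, mul_e he x.property] :
        algebraMap T A c * e * x.val = x.val * (algebraMap T A c * e)))

end Corner

section Aux

universe v

variable {T : Type*} {A : Type*} [CommRing T] [Ring A] [Algebra T A]

namespace Corner

variable {e : A} {he : IsIdempotentElem e}

@[simp] lemma val_add (x y : Corner e he) : (x + y).val = x.val + y.val := rfl
@[simp] lemma val_zero : (0 : Corner e he).val = 0 := rfl
@[simp] lemma val_mul (x y : Corner e he) : (x * y).val = x.val * y.val := rfl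
@[simp] lemma val_one : (1 : Corner e he).val = e := rfl

lemma val_algebraMap (t : T) :
    (algebraMap T (Corner e he) t).val = algebraMap T A t * e := rfl

@[simp] lemma val_smul (t : T) (x : Corner e he) : (t • x).val = t • x.val := by
  rw [Algebra.smul_def, val_mul, val_algebraMap, mul_assoc,
    e_mul he x.property, ← Algebra.smul_def]

variable (T) (he)

/-- Inclusion of the corner into `A`, as a `T`-linear map. -/
noncomputable def ι : Corner e he →ₗ[T] A where
  toFun := val
  map_add' _ _ := rfl
  map_smul' t x := val_smul t x

@[simp] lemma ι_apply (x : Corner e he) : ι T he x = x.val := rfl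

/-- Projection of `A` onto the corner, `a ↦ e * a * e`. -/
noncomputable def pr : A →ₗ[T] Corner e he where
  toFun a := ⟨e * a * e, by simp only [← mul_assoc]; rw [he.eq, mul_assoc, he.eq]⟩
  map_add' a b := by apply Corner.ext; simp [mul_add, add_mul]
  map_smul' t a := by
    apply Corner.ext
    simp [mul_smul_comm, smul_mul_assoc, mul_assoc]

@[simp] lemma pr_apply_val (a : A) : (pr T he a).val = e * a * e := rfl

lemma pr_comp_ι : (pr T he) ∘ₗ (ι T he) = LinearMap.id := by
  ext x
  simpa using x.property

end Corner

end Aux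
section Aux2

variable (T : Type*) {A : Type*} [CommRing T] [Ring A] [Algebra T A]

/-- The right ideal `Ae` as a `T`-submodule of `A`. -/
def cornerRightIdeal (e : A) : Submodule T A where
  carrier := {x | x * e = x}
  add_mem' := fun {a b} ha hb => by simp only [Set.mem_setOf_eq] at *; rw [add_mul, ha, hb]
  zero_mem' := by simp
  smul_mem' := fun t a ha => by simp only [Set.mem_setOf_eq] at *; rw [smul_mul_assoc, ha]

lemma mem_cornerRightIdeal {e : A} {x : A} :
    x ∈ cornerRightIdeal T e ↔ x * e = x := Iff.rfl

variable {T}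

/-- Abstract transport of bijectivity to corners. -/
theorem corner_bijective {M N M' N' : Type*}
    [AddCommGroup M] [Module T M] [AddCommGroup N] [Module T N]
    [AddCommGroup M'] [Module T M'] [AddCommGroup N'] [Module T N']
    (F : M →ₗ[T] N) (hF : Function.Bijective F)
    (j : M' →ₗ[T] M) (rj : M →ₗ[T] M') (hj : rj ∘ₗ j = LinearMap.id)
    (k : N' →ₗ[T] N) (rk : N →ₗ[T] N') (hk : rk ∘ₗ k = LinearMap.id)
    (G : M' →ₗ[T] N') (hcomm : k ∘ₗ G = F ∘ₗ j)
    (hcorner : F ∘ₗ (j ∘ₗ rj) = (k ∘ₗ rk) ∘ₗ F) :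
    Function.Bijective G := by
  have hjl : ∀ x, rj (j x) = x := fun x => congrArg (fun f => f x) hj
  have hkl : ∀ x, rk (k x) = x := fun x => congrArg (fun f => f x) hk
  have hkinj : Function.Injective k := Function.LeftInverse.injective hkl
  have hco : ∀ x, k (G x) = F (j x) := fun x => congrArg (fun f => f x) hcomm
  constructor
  · intro x y hxy
    have : F (j x) = F (j y) := by rw [← hco, ← hco, hxy]
    have := hF.1 this
    rw [← hjl x, ← hjl y, this]
  · intro n
    obtain ⟨z, hz⟩ := hF.2 (k n)
    refine ⟨rj z, hkinj ?_⟩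
    have h1 : F (j (rj z)) = k (rk (F z)) := congrArg (fun f => f z) hcorner
    rw [hco, h1, hz, hkl]

end Aux2
section Aux3

open MulOpposite

variable (T : Type*) {A : Type*} [CommRing T] [Ring A] [Algebra T A]

@[simp] lemma azumayaMap_tmul (a x : A) (b : Aᵐᵒᵖ) :
    azumayaMap T A (a ⊗ₜ[T] b) x = a * (x * b.unop) := rfl

/-- The Azumaya map as an algebra hom. -/
noncomputable def azumayaAlgHom (A : Type*) [Ring A] [Algebra T A] :
    A ⊗[T] Aᵐᵒᵖ →ₐ[T] Module.End T A :=
  Algebra.TensorProduct.algHomOfLinearMapTensorProduct (azumayaMap T A)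
    (fun a₁ a₂ b₁ b₂ => by
      ext x
      simp [mul_assoc])
    (by ext x; simp)

@[simp] lemma azumayaAlgHom_toLinearMap (A : Type*) [Ring A] [Algebra T A] :
    (azumayaAlgHom T A).toLinearMap = azumayaMap T A := rfl

/-- Conjugation of endomorphisms along a pair of maps. -/
def endCongrMap {M N : Type*} [AddCommGroup M] [Module T M] [AddCommGroup N] [Module T N]
    (u : M →ₗ[T] N) (v : N →ₗ[T] M) : Module.End T M →ₗ[T] Module.End T N where
  toFun g := u ∘ₗ g ∘ₗ v
  map_add' g h := by ext x; simp
  map_smul' t g := by ext x; simp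

@[simp] lemma endCongrMap_apply {M N : Type*} [AddCommGroup M] [Module T M] [AddCommGroup N]
    [Module T N] (u : M →ₗ[T] N) (v : N →ₗ[T] M) (g : Module.End T M) (x : N) :
    endCongrMap T u v g x = u (g (v x)) := rfl

namespace Corner

variable {e : A} (he : IsIdempotentElem e)

/-- Inclusion of the opposite corner into `Aᵐᵒᵖ`. -/
noncomputable def ιop : (Corner e he)ᵐᵒᵖ →ₗ[T] Aᵐᵒᵖ where
  toFun c := op c.unop.val
  map_add' x y := by simp
  map_smul' t x := by simp

@[simp] lemma ιop_apply (c : (Corner e he)ᵐᵒᵖ) : ιop T he c = op c.unop.val := rfl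

/-- Projection of `Aᵐᵒᵖ` onto the opposite corner. -/
noncomputable def prop : Aᵐᵒᵖ →ₗ[T] (Corner e he)ᵐᵒᵖ where
  toFun b := op (pr T he b.unop)
  map_add' x y := by simp
  map_smul' t x := by simp

@[simp] lemma prop_apply (b : Aᵐᵒᵖ) : prop T he b = op (pr T he b.unop) := rfl

@[simp] lemma pr_val (x : Corner e he) : pr T he x.val = x :=
  Corner.ext (by simpa using x.property)

lemma prop_comp_ιop : (prop T he) ∘ₗ (ιop T he) = LinearMap.id := by
  ext c
  simp

end Corner

end Aux3
section Aux4

open MulOpposite Corner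

variable (T : Type*) {A : Type*} [CommRing T] [Ring A] [Algebra T A]
variable {e : A} (he : IsIdempotentElem e)

lemma mem_cornerRightIdeal_of_mul (a : A) (q : cornerRightIdeal T e) (c : Corner e he) :
    (a * q.val * c.val) * e = a * q.val * c.val := by
  rw [mul_assoc (a * q.val), mul_e he c.property]

/-- The basic endomorphism `q ↦ a q c` of `Ae`. -/
noncomputable def thetaEnd (a : A) (c : Corner e he) :
    Module.End T (cornerRightIdeal T e) where
  toFun q := ⟨a * q.val * c.val, mem_cornerRightIdeal_of_mul T he a q c⟩
  map_add' x y := by apply Subtype.ext; simp [mul_add, add_mul]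
  map_smul' t x := by apply Subtype.ext; simp [mul_smul_comm, smul_mul_assoc]

@[simp] lemma thetaEnd_apply_val (a : A) (c : Corner e he) (q : cornerRightIdeal T e) :
    (thetaEnd T he a c q).val = a * q.val * c.val := rfl

/-- The linear map `A ⊗ (eAe)ᵒᵖ → End(Ae)`. -/
noncomputable def thetaMap : A ⊗[T] (Corner e he)ᵐᵒᵖ →ₗ[T] Module.End T (cornerRightIdeal T e) :=
  TensorProduct.lift <|
    LinearMap.mk₂ T (fun a c => thetaEnd T he a c.unop)
      (fun a a' c => by ext q; simp [add_mul])
      (fun t a c => by ext q; simp [smul_mul_assoc])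
      (fun a c c' => by ext q; simp [mul_add])
      (fun t a c => by ext q; simp [mul_smul_comm])

@[simp] lemma thetaMap_tmul (a : A) (c : (Corner e he)ᵐᵒᵖ) (q : cornerRightIdeal T e) :
    (thetaMap T he (a ⊗ₜ c) q).val = a * q.val * c.unop.val := rfl

/-- The inclusion `Ae → A`. -/
noncomputable def inclAe : cornerRightIdeal T e →ₗ[T] A := (cornerRightIdeal T e).subtype

/-- The projection `A → Ae`, `x ↦ x e`. -/
noncomputable def projAe : A →ₗ[T] cornerRightIdeal T e :=
  LinearMap.codRestrict (cornerRightIdeal T e) (LinearMap.mulRight T e)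
    (fun x => by simp only [LinearMap.mulRight_apply, mem_cornerRightIdeal,
      mul_assoc, he.eq])

@[simp] lemma inclAe_apply (q : cornerRightIdeal T e) : inclAe T q = q.val := rfl
@[simp] lemma projAe_apply_val (x : A) : (projAe T he x).val = x * e := rfl

@[simp] lemma val_mul_e (q : cornerRightIdeal T e) : q.val * e = q.val := q.prop

@[simp] lemma projAe_val (q : cornerRightIdeal T e) : projAe T he q.val = q :=
  Subtype.ext (by simp)

lemma projAe_comp_inclAe : (projAe T he) ∘ₗ (inclAe T) = LinearMap.id := by
  ext q
  simp

lemma theta_bijective (hA : Function.Bijective (azumayaMap T A)) :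
    Function.Bijective (thetaMap T he) := by
  refine corner_bijective (azumayaMap T A) hA
    (TensorProduct.map LinearMap.id (ιop T he)) (TensorProduct.map LinearMap.id (prop T he))
    ?_ (endCongrMap T (inclAe T) (projAe T he)) (endCongrMap T (projAe T he) (inclAe T)) ?_
    (thetaMap T he) ?_ ?_
  · rw [← TensorProduct.map_comp, prop_comp_ιop T he, LinearMap.comp_id, TensorProduct.map_id]
  · ext g q
    simp
  · apply TensorProduct.ext'
    intro a c
    ext x
    simp only [LinearMap.comp_apply, TensorProduct.map_tmul, LinearMap.id_apply,
      endCongrMap_apply, inclAe_apply, thetaMap_tmul, projAe_apply_val, ιop_apply,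
      azumayaMap_tmul, unop_op]
    rw [mul_assoc, mul_assoc, e_mul he c.unop.property]
  · apply TensorProduct.ext'
    intro a b
    ext x
    simp only [LinearMap.comp_apply, TensorProduct.map_tmul, LinearMap.id_apply,
      endCongrMap_apply, inclAe_apply, azumayaMap_tmul, projAe_apply_val, prop_apply,
      ιop_apply, unop_op, pr_apply_val]
    simp [mul_assoc]

lemma azumayaMap_corner_bijective (hA : Function.Bijective (azumayaMap T A)) :
    Function.Bijective (azumayaMap T (Corner e he)) := by
  refine corner_bijective (azumayaMap T A) hA
    (TensorProduct.map (ι T he) (ιop T he)) (TensorProduct.map (pr T he) (prop T he))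
    ?_ (endCongrMap T (ι T he) (pr T he)) (endCongrMap T (pr T he) (ι T he)) ?_
    (azumayaMap T (Corner e he)) ?_ ?_
  · rw [← TensorProduct.map_comp, prop_comp_ιop T he, pr_comp_ι T he, TensorProduct.map_id]
  · ext g x
    simp
  · apply TensorProduct.ext'
    intro c d
    ext a
    simp only [LinearMap.comp_apply, TensorProduct.map_tmul, endCongrMap_apply,
      ι_apply, azumayaMap_tmul, val_mul, pr_apply_val, ιop_apply, unop_op]
    rw [mul_assoc (e * a) e, e_mul he d.unop.property, ← mul_assoc c.val (e * a),
      ← mul_assoc c.val e a, mul_e he c.property, mul_assoc]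
  · apply TensorProduct.ext'
    intro a b
    ext x
    simp only [LinearMap.comp_apply, TensorProduct.map_tmul, endCongrMap_apply,
      ι_apply, azumayaMap_tmul, val_mul, pr_apply_val, prop_apply, ιop_apply, unop_op]
    simp [mul_assoc]

end Aux4
section Aux5

variable {T : Type*} [CommRing T]

theorem faithfulSMul_of_nontrivial_quot {M : Type*} [AddCommGroup M] [Module T M]
    [Module.Projective T M]
    (h : ∀ m : MaximalSpectrum T, Nontrivial (M ⊗[T] (T ⧸ m.asIdeal))) :
    FaithfulSMul T M := by
  obtain ⟨s, hs⟩ := (Module.projective_def').1 ‹Module.Projective T M›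
  have hsx : ∀ x : M, (Finsupp.linearCombination T id) (s x) = x := fun x =>
    congrArg (fun f => f x) hs
  set J : Ideal T := Ideal.span {t : T | ∃ (x : M) (a : M), (s x) a = t} with hJ
  have hJtop : J = ⊤ := by
    by_contra hne
    obtain ⟨m, hm, hJm⟩ := Ideal.exists_le_maximal J hne
    have htop : (m • ⊤ : Submodule T M) = ⊤ := by
      rw [eq_top_iff]
      intro x _
      have : x = (s x).sum fun a c => c • a := by
        conv_lhs => rw [← hsx x]
        simp [Finsupp.linearCombination_apply]
      rw [this]
      refine Submodule.sum_mem _ fun a ha => ?_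
      refine Submodule.smul_mem_smul ?_ trivial
      exact hJm (Ideal.subset_span ⟨x, a, rfl⟩)
    have hsub : Subsingleton (M ⧸ (m • ⊤ : Submodule T M)) :=
      Submodule.Quotient.subsingleton_iff.2 htop
    have hnt : Nontrivial (M ⊗[T] (T ⧸ m)) := h ⟨m, hm⟩
    have : Nontrivial (M ⧸ (m • ⊤ : Submodule T M)) :=
      (TensorProduct.tensorQuotEquivQuotSMul M m).symm.toEquiv.nontrivial
    exact not_subsingleton_iff_nontrivial.2 this hsub
  constructor
  intro t₁ t₂ hteq
  have hz : ∀ x : M, (t₁ - t₂) • x = 0 := fun x => by rw [sub_smul, hteq, sub_self]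
  have hall : ∀ u ∈ J, (t₁ - t₂) * u = 0 := by
    intro u hu
    refine Submodule.span_induction ?_ ?_ ?_ ?_ hu
    · rintro _ ⟨x, a, rfl⟩
      have : s ((t₁ - t₂) • x) = (t₁ - t₂) • s x := map_smul s _ _
      have h2 : ((t₁ - t₂) • s x) a = 0 := by rw [← this, hz, map_zero]; rfl
      simpa using h2
    · simp
    · intro u v _ _ hu hv
      rw [mul_add, hu, hv, add_zero]
    · intro r u _ hu
      rw [smul_eq_mul, mul_left_comm, hu, mul_zero]
  have h1 : (1 : T) ∈ J := hJtop ▸ trivial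
  have := hall 1 h1
  rw [mul_one, sub_eq_zero] at this
  exact this

end Aux5
section Aux6

open MulOpposite Corner

variable (T : Type*) {A : Type*} [CommRing T] [Ring A] [Algebra T A]
variable {e : A} (he : IsIdempotentElem e)

lemma corner_finite [Module.Finite T A] : Module.Finite T (Corner e he) :=
  Module.Finite.of_surjective (pr T he) (fun x => ⟨x.val, pr_val T he x⟩)

lemma corner_projective [Module.Projective T A] : Module.Projective T (Corner e he) :=
  Module.Projective.of_split (ι T he) (pr T he) (pr_comp_ι T he)

include he in
lemma ae_finite [Module.Finite T A] : Module.Finite T (cornerRightIdeal T e) :=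
  Module.Finite.of_surjective (projAe T he) (fun q => ⟨q.val, projAe_val T he q⟩)

include he in
lemma ae_projective [Module.Projective T A] : Module.Projective T (cornerRightIdeal T e) :=
  Module.Projective.of_split (inclAe T) (projAe T he) (projAe_comp_inclAe T he)

/-- Inclusion of the corner into `Ae`. -/
noncomputable def cornerToAe : Corner e he →ₗ[T] cornerRightIdeal T e :=
  LinearMap.codRestrict (cornerRightIdeal T e) (ι T he) (fun c => mul_e he c.property)

@[simp] lemma cornerToAe_apply_val (c : Corner e he) : (cornerToAe T he c).val = c.val := rfl

lemma pr_comp_cornerToAe :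
    ((pr T he) ∘ₗ (inclAe T)) ∘ₗ (cornerToAe T he) = LinearMap.id := by
  ext c
  simp

lemma nontrivial_tensor_ae {N : Type*} [AddCommGroup N] [Module T N]
    (h : Nontrivial ((Corner e he) ⊗[T] N)) :
    Nontrivial ((cornerRightIdeal T e) ⊗[T] N) := by
  rw [← not_subsingleton_iff_nontrivial]
  intro hcon
  have hinj : Function.Injective
      (TensorProduct.map (cornerToAe T he) (LinearMap.id (M := N))) := by
    have hcomp : (TensorProduct.map ((pr T he) ∘ₗ (inclAe T)) (LinearMap.id (M := N))) ∘ₗ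
        (TensorProduct.map (cornerToAe T he) (LinearMap.id (M := N))) = LinearMap.id := by
      rw [← TensorProduct.map_comp, pr_comp_cornerToAe, LinearMap.comp_id,
        TensorProduct.map_id]
    intro x y hxy
    have := congrArg (TensorProduct.map ((pr T he) ∘ₗ (inclAe T)) (LinearMap.id (M := N))) hxy
    rwa [← LinearMap.comp_apply, hcomp, ← LinearMap.comp_apply, hcomp,
      LinearMap.id_apply, LinearMap.id_apply] at this
  obtain ⟨x, y, hxy⟩ := h
  exact hxy (hinj (Subsingleton.elim _ _))

/-- The algebra hom `A ⊗ (eAe)ᵒᵖ →ₐ End(Ae)`. -/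
noncomputable def thetaAlgHom :
    A ⊗[T] (Corner e he)ᵐᵒᵖ →ₐ[T] Module.End T (cornerRightIdeal T e) :=
  Algebra.TensorProduct.algHomOfLinearMapTensorProduct (thetaMap T he)
    (fun a₁ a₂ b₁ b₂ => by
      ext q
      simp [mul_assoc])
    (by ext q; simp)

lemma thetaAlgHom_toLinearMap : (thetaAlgHom T he).toLinearMap = thetaMap T he := rfl

end Aux6


/-- Let `T` be a commutative ring, `A` an Azumaya `T`-algebra, and `e` a nonzero idempotent of
`A` such that `eAe ⊗_T κ(m) ≠ 0` for every maximal ideal `m` of `T`.  Then `eAe` is an Azumaya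
`T`-algebra Brauer equivalent to `A`: there are faithful finitely generated projective
`T`-modules `P`, `Q` with `eAe ⊗_T End_T(P) ≅ A ⊗_T End_T(Q)`. -/
theorem corner_azumaya_brauer_equivalent {T : Type u} {A : Type w} [CommRing T] [Ring A]
    [Algebra T A] (hA : IsAzumayaAlgebra T A) (e : A) (he : IsIdempotentElem e) (hne : e ≠ 0)
    (hres : ∀ m : MaximalSpectrum T,
      Nontrivial ((Corner e he) ⊗[T] (T ⧸ m.asIdeal))) :
    IsAzumayaAlgebra T (Corner e he) ∧
      ∃ (P : Type w) (_ : AddCommGroup P) (_ : Module T P)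
        (Q : Type w) (_ : AddCommGroup Q) (_ : Module T Q),
        Module.Finite T P ∧ Module.Projective T P ∧ FaithfulSMul T P ∧
        Module.Finite T Q ∧ Module.Projective T Q ∧ FaithfulSMul T Q ∧
        Nonempty (((Corner e he) ⊗[T] Module.End T P) ≃ₐ[T] (A ⊗[T] Module.End T Q)) := by
  obtain ⟨hfin, hproj, hfaith, hbij⟩ := hA
  haveI : Module.Finite T A := hfin
  haveI : Module.Projective T A := hproj
  haveI hCfin : Module.Finite T (Corner e he) := corner_finite T he
  haveI hCproj : Module.Projective T (Corner e he) := corner_projective T he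
  haveI hCfaith : FaithfulSMul T (Corner e he) :=
    faithfulSMul_of_nontrivial_quot (fun m => hres m)
  have hCbij := azumayaMap_corner_bijective T he hbij
  haveI hPfin : Module.Finite T (cornerRightIdeal T e) := ae_finite T he
  haveI hPproj : Module.Projective T (cornerRightIdeal T e) := ae_projective T he
  haveI hPfaith : FaithfulSMul T (cornerRightIdeal T e) :=
    faithfulSMul_of_nontrivial_quot (fun m => nontrivial_tensor_ae T he (hres m))
  refine ⟨⟨hCfin, hCproj, hCfaith, hCbij⟩,
    (cornerRightIdeal T e), inferInstance, inferInstance,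
    Corner e he, inferInstance, inferInstance,
    hPfin, hPproj, hPfaith, hCfin, hCproj, hCfaith, ?_⟩
  have hθ : Function.Bijective (thetaAlgHom T he) := theta_bijective T he hbij
  have hΞ : Function.Bijective (azumayaAlgHom T (Corner e he)) := hCbij
  exact ⟨(Algebra.TensorProduct.congr (AlgEquiv.refl)
      (AlgEquiv.ofBijective (thetaAlgHom T he) hθ).symm).trans <|
    ((Algebra.TensorProduct.assoc T T T (Corner e he) A ((Corner e he)ᵐᵒᵖ)).symm).trans <|
    (Algebra.TensorProduct.congr (Algebra.TensorProduct.comm T (Corner e he) A)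
      AlgEquiv.refl).trans <|
    (Algebra.TensorProduct.assoc T T T A (Corner e he) ((Corner e he)ᵐᵒᵖ)).trans <|
    (Algebra.TensorProduct.congr AlgEquiv.refl
      (AlgEquiv.ofBijective (azumayaAlgHom T (Corner e he)) hΞ))⟩
end

section
/- Let K be a field of characteristic not 2, let L = K(√a₁) be a quadratic field extension of K, and let x₂, x₃ ∈ L*, a₂, a₃ ∈ K*. Suppose the quaternion algebras (a₂, N_{L/K}(x₂))_K and (a₃, N_{L/K}(x₃))_K are isomorphic. Then there exists y ∈ K* such that (a₂, N_{L/K}(x₂))_K ≅ (y, N_{L/K}(x₂))_K and (y, N_{L/K}(x₃))_K ≅ (a₃, N_{L/K}(x₃))_K. -/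
open Quaternion

section Aux

variable {K : Type*} [Field K]

lemma slot_iso (a b x z y : K) (hd : x^2 - b*z^2 ≠ 0)
    (hy : a*x^2 - a*b*z^2 = y) :
    Nonempty (ℍ[K,y,b] ≃ₐ[K] ℍ[K,a,b]) := by
  let B1 : QuaternionAlgebra.Basis ℍ[K,a,b] y 0 b :=
    { i := ⟨0,x,0,z⟩
      j := ⟨0,0,1,0⟩
      k := ⟨0,b*z,0,x⟩
      i_mul_i := by ext <;> simp <;> first | ring1 | linear_combination hy | linear_combination -hy
      j_mul_j := by ext <;> simp
      i_mul_j := by ext <;> simp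
      j_mul_i := by ext <;> simp }
  let B2 : QuaternionAlgebra.Basis ℍ[K,y,b] a 0 b :=
    { i := ⟨0,x/(x^2-b*z^2),0,-z/(x^2-b*z^2)⟩
      j := ⟨0,0,1,0⟩
      k := ⟨0,-(b*z)/(x^2-b*z^2),0,x/(x^2-b*z^2)⟩
      i_mul_i := by
        ext <;> simp <;> field_simp <;>
          first | ring1 | linear_combination (x^2-b*z^2)*hy | linear_combination -(x^2-b*z^2)*hy | linear_combination -hy
      j_mul_j := by ext <;> simp
      i_mul_j := by ext <;> simp <;> field_simp <;> ring
      j_mul_i := by ext <;> simp <;> field_simp <;> ring }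
  refine ⟨AlgEquiv.ofAlgHom B1.liftHom B2.liftHom ?_ ?_⟩
  · ext <;> simp [B1, B2, QuaternionAlgebra.Basis.lift] <;> field_simp <;> ring
  · ext <;> simp [B1, B2, QuaternionAlgebra.Basis.lift] <;> field_simp <;> ring

lemma pure_re_eq_zero {a b a' b' : K} (hK : (2:K) ≠ 0)
    (φ : ℍ[K,a,b] ≃ₐ[K] ℍ[K,a',b']) (s t : K) :
    (φ.symm ⟨0,s,0,t⟩).re = 0 := by
  obtain ⟨w, hw⟩ : ∃ w : ℍ[K,a,b], w = φ.symm ⟨0,s,0,t⟩ := ⟨_, rfl⟩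
  rw [← hw]
  have hsq : (⟨0,s,0,t⟩ : ℍ[K,a',b']) * ⟨0,s,0,t⟩ = (a'*s^2 - a'*b'*t^2) • 1 := by
    ext <;> simp [QuaternionAlgebra.re_mul, QuaternionAlgebra.imI_mul,
      QuaternionAlgebra.imJ_mul, QuaternionAlgebra.imK_mul] <;> ring
  have hww : w * w = (a'*s^2 - a'*b'*t^2) • 1 := by
    rw [hw, ← map_mul, hsq, map_smul, map_one]
  have keyI : (2:K) * (w.re * w.imI) = 0 := by
    have h2 := congrArg QuaternionAlgebra.imI hww
    simp only [QuaternionAlgebra.imI_mul, QuaternionAlgebra.imI_smul,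
      QuaternionAlgebra.imI_one, smul_eq_mul, mul_zero] at h2
    linear_combination h2
  have keyJ : (2:K) * (w.re * w.imJ) = 0 := by
    have h2 := congrArg QuaternionAlgebra.imJ hww
    simp only [QuaternionAlgebra.imJ_mul, QuaternionAlgebra.imJ_smul,
      QuaternionAlgebra.imJ_one, smul_eq_mul, mul_zero] at h2
    linear_combination h2
  have keyK : (2:K) * (w.re * w.imK) = 0 := by
    have h2 := congrArg QuaternionAlgebra.imK hww
    simp only [QuaternionAlgebra.imK_mul, QuaternionAlgebra.imK_smul,
      QuaternionAlgebra.imK_one, smul_eq_mul, mul_zero] at h2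
    linear_combination h2
  by_cases hre : w.re = 0
  · exact hre
  · have hI : w.imI = 0 :=
      ((mul_eq_zero.mp ((mul_eq_zero.mp keyI).resolve_left hK)).resolve_left hre)
    have hJ : w.imJ = 0 :=
      ((mul_eq_zero.mp ((mul_eq_zero.mp keyJ).resolve_left hK)).resolve_left hre)
    have hKK : w.imK = 0 :=
      ((mul_eq_zero.mp ((mul_eq_zero.mp keyK).resolve_left hK)).resolve_left hre)
    have hwre : w = w.re • 1 := by ext <;> simp [hI, hJ, hKK]
    have h5 : φ w = ⟨0,s,0,t⟩ := by rw [hw]; exact φ.apply_symm_apply _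
    have h6 : φ (w.re • 1) = w.re • 1 := by rw [map_smul, map_one]
    have h7 : (⟨0,s,0,t⟩ : ℍ[K,a',b']) = w.re • 1 := by rw [← h5]; conv_lhs => rw [hwre]; rw [h6]
    have h8 := congrArg QuaternionAlgebra.re h7
    simp at h8
    exact h8.symm

/-- The `re` coordinate as a linear map. -/
def reLin (c₁ c₂ : K) : ℍ[K,c₁,c₂] →ₗ[K] K where
  toFun := QuaternionAlgebra.re
  map_add' _ _ := rfl
  map_smul' _ _ := rfl

end Aux

/-- Common slot lemma setup: `K` a field of characteristic ≠ 2, `L = K(√a₁)` a quadratic field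
extension, `x₂ x₃ ∈ L*`, `a₂ a₃ ∈ K*`.  If `(a₂, N(x₂))_K ≅ (a₃, N(x₃))_K` then there is
`y ∈ K*` with `(a₂, N(x₂))_K ≅ (y, N(x₂))_K` and `(y, N(x₃))_K ≅ (a₃, N(x₃))_K`. -/
theorem quaternion_common_slot (K L : Type*) [Field K] [Field L] [Algebra K L]
    (hK : (2 : K) ≠ 0) (a₁ : K) (ha₁ : a₁ ≠ 0)
    (hquad : Module.finrank K L = 2) (α : L) (hα : α * α = algebraMap K L a₁)
    (x₂ x₃ : L) (hx₂ : x₂ ≠ 0) (hx₃ : x₃ ≠ 0)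
    (a₂ a₃ : K) (ha₂ : a₂ ≠ 0) (ha₃ : a₃ ≠ 0)
    (h : Nonempty (ℍ[K, a₂, Algebra.norm K x₂] ≃ₐ[K] ℍ[K, a₃, Algebra.norm K x₃])) :
    ∃ y : K, y ≠ 0 ∧
      Nonempty (ℍ[K, a₂, Algebra.norm K x₂] ≃ₐ[K] ℍ[K, y, Algebra.norm K x₂]) ∧
      Nonempty (ℍ[K, y, Algebra.norm K x₃] ≃ₐ[K] ℍ[K, a₃, Algebra.norm K x₃]) := by
  have fd : FiniteDimensional K L := FiniteDimensional.of_finrank_eq_succ (n := 1) hquad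
  have hb₂ : Algebra.norm K x₂ ≠ 0 := Algebra.norm_ne_zero_iff.mpr hx₂
  have hb₃ : Algebra.norm K x₃ ≠ 0 := Algebra.norm_ne_zero_iff.mpr hx₃
  set b₂ := Algebra.norm K x₂ with hb2def
  set b₃ := Algebra.norm K x₃ with hb3def
  clear_value b₂ b₃
  by_cases hsqu : IsSquare b₂
  · -- b₂ is a square: the binary form ⟨a₂, -a₂ b₂⟩ is hyperbolic and represents a₃
    obtain ⟨c, hc⟩ := hsqu
    have hc0 : c ≠ 0 := by rintro rfl; rw [mul_zero] at hc; exact hb₂ hc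
    refine ⟨a₃, ha₃, ?_, ⟨AlgEquiv.refl⟩⟩
    have key : a₂*((1+a₃/a₂)/2)^2 - a₂*b₂*((1-a₃/a₂)/(2*c))^2 = a₃ := by
      rw [hc]; field_simp; ring
    have hd : ((1+a₃/a₂)/2)^2 - b₂*((1-a₃/a₂)/(2*c))^2 ≠ 0 := by
      intro h0
      apply ha₃
      rw [← key]
      linear_combination a₂ * h0
    obtain ⟨e⟩ := slot_iso a₂ b₂ _ _ a₃ hd key
    exact ⟨e.symm⟩
  · obtain ⟨φ⟩ := h
    -- the four pure elements i₂, k₂, φ.symm i₃, φ.symm k₃ are linearly dependent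
    have hdep : ¬ LinearIndependent K
        ![(⟨0,1,0,0⟩ : ℍ[K,a₂,b₂]), ⟨0,0,0,1⟩, φ.symm ⟨0,1,0,0⟩, φ.symm ⟨0,0,0,1⟩] := by
      intro hind
      have hcard : Fintype.card (Fin 4) = Module.finrank K ℍ[K,a₂,b₂] := by
        simp [QuaternionAlgebra.finrank_eq_four]
      let bas := basisOfLinearIndependentOfCardEqFinrank hind hcard
      have hz : reLin a₂ b₂ = 0 := by
        apply bas.ext
        intro i
        have hbi : ⇑bas = _ := coe_basisOfLinearIndependentOfCardEqFinrank hind hcard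
        rw [hbi]
        fin_cases i <;>
          simp [reLin, pure_re_eq_zero hK φ 1 0, pure_re_eq_zero hK φ 0 1]
      have : (1:K) = 0 := by
        have := congrArg (fun f => f (1 : ℍ[K,a₂,b₂])) hz
        simpa [reLin] using this
      exact one_ne_zero this
    rw [Fintype.not_linearIndependent_iff] at hdep
    obtain ⟨g, hsum, j0, hj0⟩ := hdep
    rw [Fin.sum_univ_four] at hsum
    simp only [Matrix.cons_val_zero, Matrix.cons_val_one, Matrix.head_cons,
      Matrix.cons_val_two, Matrix.tail_cons, Matrix.cons_val_three] at hsum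
    -- q := g0 • i₂ + g1 • k₂ equals φ.symm (⟨0, -g2, 0, -g3⟩)
    have hq : (⟨0, g 0, 0, g 1⟩ : ℍ[K,a₂,b₂]) = φ.symm ⟨0, -g 2, 0, -g 3⟩ := by
      have hrhs : φ.symm (⟨0, -g 2, 0, -g 3⟩ : ℍ[K,a₃,b₃])
          = (-g 2) • φ.symm ⟨0,1,0,0⟩ + (-g 3) • φ.symm ⟨0,0,0,1⟩ := by
        rw [← map_smul, ← map_smul, ← map_add]
        congr 1
        ext <;> simp
      rw [hrhs]
      have hlhs : (⟨0, g 0, 0, g 1⟩ : ℍ[K,a₂,b₂])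
          = g 0 • ⟨0,1,0,0⟩ + g 1 • ⟨0,0,0,1⟩ := by ext <;> simp
      rw [hlhs]
      linear_combination (norm := module) hsum
    have hne : ¬ (g 0 = 0 ∧ g 1 = 0) := by
      rintro ⟨h0, h1⟩
      rw [h0, h1] at hq
      have : (⟨0,(0:K),0,0⟩ : ℍ[K,a₂,b₂]) = 0 := by ext <;> simp
      rw [this] at hq
      have h4 : (⟨0, -g 2, 0, -g 3⟩ : ℍ[K,a₃,b₃]) = 0 := by
        have := congrArg φ hq
        simpa using this.symm
      have h5 : g 2 = 0 := by have := congrArg QuaternionAlgebra.imI h4; simpa using this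
      have h6 : g 3 = 0 := by have := congrArg QuaternionAlgebra.imK h4; simpa using this
      fin_cases j0 <;> simp_all
    set y := a₂ * (g 0)^2 - a₂ * b₂ * (g 1)^2 with hydef
    have hy0 : y ≠ 0 := by
      intro h0
      have hx2 : (g 0)^2 = b₂ * (g 1)^2 := by
        apply mul_left_cancel₀ ha₂
        linear_combination h0
      by_cases hz1 : g 1 = 0
      · have : g 0 = 0 := by
          have : (g 0)^2 = 0 := by rw [hx2, hz1]; ring
          exact pow_eq_zero_iff (n := 2) (by norm_num) |>.mp this
        exact hne ⟨this, hz1⟩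
      · refine hsqu ⟨g 0 / g 1, ?_⟩
        field_simp
        first
        | linear_combination hx2
        | linear_combination -hx2
        | linear_combination (g 1)^2 * hx2
        | linear_combination -((g 1)^2) * hx2
    have hd₂ : (g 0)^2 - b₂*(g 1)^2 ≠ 0 := by
      intro h0; exact hy0 (by rw [hydef]; linear_combination a₂ * h0)
    obtain ⟨e1⟩ := slot_iso a₂ b₂ (g 0) (g 1) y hd₂ (by rw [hydef])
    -- now transport to the third algebra
    have hqq : (⟨0, g 0, 0, g 1⟩ : ℍ[K,a₂,b₂]) * ⟨0, g 0, 0, g 1⟩ = y • 1 := by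
      ext <;> simp [QuaternionAlgebra.re_mul, QuaternionAlgebra.imI_mul,
        QuaternionAlgebra.imJ_mul, QuaternionAlgebra.imK_mul, hydef] <;> ring
    have hq3 : (⟨0, -g 2, 0, -g 3⟩ : ℍ[K,a₃,b₃]) * ⟨0, -g 2, 0, -g 3⟩ = y • 1 := by
      have h1 : (⟨0, -g 2, 0, -g 3⟩ : ℍ[K,a₃,b₃]) = φ ⟨0, g 0, 0, g 1⟩ := by
        rw [hq]; exact (φ.apply_symm_apply _).symm
      rw [h1, ← map_mul, hqq, map_smul, map_one]
    have hy₃ : a₃*(-g 2)^2 - a₃*b₃*(-g 3)^2 = y := by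
      have h2 := congrArg QuaternionAlgebra.re hq3
      simp only [QuaternionAlgebra.re_mul, QuaternionAlgebra.re_smul,
        QuaternionAlgebra.re_one, smul_eq_mul, mul_one] at h2
      linear_combination h2
    have hd₃ : (-g 2)^2 - b₃*(-g 3)^2 ≠ 0 := by
      intro h0; exact hy0 (by rw [← hy₃]; linear_combination a₃ * h0)
    obtain ⟨e2⟩ := slot_iso a₃ b₃ (-g 2) (-g 3) y hd₃ hy₃
    exact ⟨y, hy0, ⟨e1.symm⟩, ⟨e2⟩⟩
end

section
/- Let K be a field of characteristic not 2 and a, b, c ∈ K*. If the quaternion algebras (a,b)_K and (a,c)_K are isomorphic, then bc is a norm from K(√a), i.e., bc = u² - a v² for some u, v ∈ K. -/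
open Quaternion

/-- If `K` is a field of characteristic not 2, `a b c ∈ K*`, and the quaternion algebras
`(a,b)_K` and `(a,c)_K` are isomorphic, then `bc` is a norm from `K(√a)`:
`bc = u² - a·v²` for some `u v ∈ K`. -/
theorem quaternionAlgebra_iso_mul_isNorm (K : Type*) [Field K] (hK : (2 : K) ≠ 0)
    (a b c : K) (ha : a ≠ 0) (hb : b ≠ 0) (hc : c ≠ 0)
    (h : Nonempty (ℍ[K, a, b] ≃ₐ[K] ℍ[K, a, c])) :
    ∃ u v : K, b * c = u ^ 2 - a * v ^ 2 := by
  by_cases hsq : ∃ d : K, d ^ 2 = a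
  · obtain ⟨d, hd⟩ := hsq
    have hd0 : d ≠ 0 := by
      rintro rfl
      exact ha (by simpa using hd.symm)
    refine ⟨(b * c + 1) / 2, (b * c - 1) / (2 * d), ?_⟩
    field_simp
    linear_combination (2 * b * c - b ^ 2 * c ^ 2 - 1) * hd
  · obtain ⟨φ⟩ := h
    set i : ℍ[K,a,b] := ⟨0, 1, 0, 0⟩ with hi
    set j : ℍ[K,a,b] := ⟨0, 0, 1, 0⟩ with hj
    have hii : i * i = algebraMap K ℍ[K,a,b] a := by
      rw [QuaternionAlgebra.algebraMap_eq]
      ext <;> simp [hi]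
    have hjj : j * j = algebraMap K ℍ[K,a,b] b := by
      rw [QuaternionAlgebra.algebraMap_eq]
      ext <;> simp [hj]
    have hij : i * j + j * i = 0 := by
      ext <;> simp [hi, hj]
    have hPa : φ i * φ i = algebraMap K ℍ[K,a,c] a := by
      rw [← map_mul, hii, AlgEquiv.commutes]
    have hQb : φ j * φ j = algebraMap K ℍ[K,a,c] b := by
      rw [← map_mul, hjj, AlgEquiv.commutes]
    have hPQ : φ i * φ j + φ j * φ i = 0 := by
      rw [← map_mul, ← map_mul, ← map_add, hij, map_zero]
    -- the real parts of φ i and φ j vanish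
    have hre : ∀ (u : ℍ[K,a,b]) (s : K), (∀ w : K, u ≠ algebraMap K ℍ[K,a,b] w) →
        φ u * φ u = algebraMap K ℍ[K,a,c] s → (φ u).re = 0 := by
      intro u s hu1 hus
      by_contra hw
      have hI := congrArg QuaternionAlgebra.imI hus
      have hJ := congrArg QuaternionAlgebra.imJ hus
      have hKk := congrArg QuaternionAlgebra.imK hus
      simp only [QuaternionAlgebra.imI_mul, QuaternionAlgebra.imJ_mul,
        QuaternionAlgebra.imK_mul, QuaternionAlgebra.algebraMap_eq] at hI hJ hKk
      have hx : (φ u).imI = 0 := by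
        have h2 : (2 * (φ u).re) * (φ u).imI = 0 := by linear_combination hI
        exact (mul_eq_zero.1 h2).resolve_left (mul_ne_zero hK hw)
      have hy : (φ u).imJ = 0 := by
        have h2 : (2 * (φ u).re) * (φ u).imJ = 0 := by linear_combination hJ
        exact (mul_eq_zero.1 h2).resolve_left (mul_ne_zero hK hw)
      have hz : (φ u).imK = 0 := by
        have h2 : (2 * (φ u).re) * (φ u).imK = 0 := by linear_combination hKk
        exact (mul_eq_zero.1 h2).resolve_left (mul_ne_zero hK hw)
      have hP : φ u = algebraMap K ℍ[K,a,c] ((φ u).re) := by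
        rw [QuaternionAlgebra.algebraMap_eq]
        ext <;> simp [hx, hy, hz]
      have heq : u = algebraMap K ℍ[K,a,b] ((φ u).re) := by
        apply φ.injective
        rw [AlgEquiv.commutes]
        exact hP
      exact hu1 _ heq
    have hwP : (φ i).re = 0 := by
      refine hre i a (fun w hw => ?_) hPa
      have := congrArg QuaternionAlgebra.imI hw
      rw [QuaternionAlgebra.algebraMap_eq] at this
      simp [hi] at this
    have hwQ : (φ j).re = 0 := by
      refine hre j b (fun w hw => ?_) hQb
      have := congrArg QuaternionAlgebra.imJ hw
      rw [QuaternionAlgebra.algebraMap_eq] at this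
      simp [hj] at this
    set x := (φ i).imI with hxdef
    set y := (φ i).imJ with hydef
    set z := (φ i).imK with hzdef
    set p := (φ j).imI with hpdef
    set q := (φ j).imJ with hqdef
    set r := (φ j).imK with hrdef
    have e1 : a * x ^ 2 + c * y ^ 2 - a * c * z ^ 2 = a := by
      have := congrArg QuaternionAlgebra.re hPa
      simp only [QuaternionAlgebra.re_mul, QuaternionAlgebra.algebraMap_eq] at this
      rw [hwP] at this
      linear_combination this
    have e2 : a * p ^ 2 + c * q ^ 2 - a * c * r ^ 2 = b := by
      have := congrArg QuaternionAlgebra.re hQb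
      simp only [QuaternionAlgebra.re_mul, QuaternionAlgebra.algebraMap_eq] at this
      rw [hwQ] at this
      linear_combination this
    have e3 : a * x * p + c * y * q - a * c * z * r = 0 := by
      have := congrArg QuaternionAlgebra.re hPQ
      simp only [QuaternionAlgebra.re_add, QuaternionAlgebra.re_mul,
        QuaternionAlgebra.re_zero] at this
      rw [hwP, hwQ] at this
      simp only [← hxdef, ← hydef, ← hzdef, ← hpdef, ← hqdef, ← hrdef] at this
      have h2 : 2 * (a * x * p + c * y * q - a * c * z * r) = 0 := by linear_combination this
      exact (mul_eq_zero.1 h2).resolve_left hK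
    by_cases hx1 : 1 - x ^ 2 = 0
    · -- here y, z must vanish since a is not a square
      have hyz : y ^ 2 - a * z ^ 2 = 0 := by
        have : c * (y ^ 2 - a * z ^ 2) = a * (1 - x ^ 2) := by linear_combination e1
        rw [hx1, mul_zero] at this
        exact (mul_eq_zero.1 this).resolve_left hc
      have hz : z = 0 := by
        by_contra hz0
        exact hsq ⟨y / z, by field_simp; linear_combination hyz⟩
      have hy : y = 0 := by
        have : y ^ 2 = 0 := by rw [hz] at hyz; linear_combination hyz
        exact pow_eq_zero_iff two_ne_zero |>.1 this
      have hx0 : x ≠ 0 := by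
        intro h0
        rw [h0] at hx1
        simp at hx1
      have hp : p = 0 := by
        have : a * x * p = 0 := by rw [hy, hz] at e3; linear_combination e3
        rcases mul_eq_zero.1 this with h' | h'
        · exact absurd h' (mul_ne_zero ha hx0)
        · exact h'
      refine ⟨c * q, c * r, ?_⟩
      rw [hp] at e2
      linear_combination (-c) * e2
    · -- main case
      set t := z * q - y * r with htdef
      set N := y ^ 2 - a * z ^ 2 with hNdef
      have hN : c * N = a * (1 - x ^ 2) := by rw [hNdef]; linear_combination e1
      have hN0 : N ≠ 0 := by
        intro h0
        rw [h0, mul_zero] at hN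
        exact hx1 ((mul_eq_zero.1 hN.symm).resolve_left ha)
      have hW : b * (1 - x ^ 2) = a * p ^ 2 - c ^ 2 * t ^ 2 := by
        have key : a * (b * (1 - x ^ 2)) = a * (a * p ^ 2 - c ^ 2 * t ^ 2) := by
          linear_combination (-(b - a * p ^ 2)) * e1 - (c * (y ^ 2 - a * z ^ 2)) * e2 +
            (c * (y * q - a * z * r) - a * x * p) * e3
        exact mul_left_cancel₀ ha key
      refine ⟨(a * p * y + a * c * t * z) / N, (a * p * z + c * t * y) / N, ?_⟩
      field_simp
      linear_combination (a * N) * hW + (b * N) * hN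
end
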